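/- arXiv:2108.10011 — 6 statements merged into one kernel-verified Lean document; each statement's English description precedes it below -/
import Mathlib

section
/- For a composition μ of n, let s_μ = min{ m : C^μ_m > 0 } (this set is nonempty since taking all t_i = 0 gives a walk with n defects). Then s_{(n)} = n, and for μ = (μ_1, …, μ_r) with r ≥ 2, writing μ̂ = (μ_1, …, μ_{r−1}) and |μ̂| = μ_1 + ⋯ + μ_{r−1}: s_μ = s_{μ̂} − μ_r if μ_r ≤ s_{μ̂}; s_μ = (s_{μ̂} − μ_r) mod 2 if s_{μ̂} < μ_r < |μ̂|; and s_μ = μ_r − |μ̂| if μ_r ≥ |μ̂|. -/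
/-- `t` is a walk over the composition `μ` with `m` defects: `0 ≤ t i ≤ μ i`,
every partial sum `∑_{i<j} (μ i − 2 t i)` is at least `t j`, and the total
`∑ i (μ i − 2 t i)` equals `m`. -/
def IsWalk {r : ℕ} (μ : Fin r → ℕ) (m : ℕ) (t : Fin r → ℕ) : Prop :=
  (∀ i, t i ≤ μ i) ∧
  (∀ j : Fin r, (t j : ℤ) ≤
      ∑ i ∈ Finset.univ.filter (fun i : Fin r => i < j), ((μ i : ℤ) - 2 * (t i : ℤ))) ∧
  (∑ i : Fin r, ((μ i : ℤ) - 2 * (t i : ℤ))) = (m : ℤ)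

/-- `C^μ_m`: the number of walks over `μ` with `m` defects. -/
noncomputable def walkCount {r : ℕ} (μ : Fin r → ℕ) (m : ℕ) : ℕ :=
  Nat.card { t : Fin r → ℕ // IsWalk μ m t }

/-- `s_μ`: the minimal number of defects of a walk over `μ`. -/
noncomputable def minDefects {r : ℕ} (μ : Fin r → ℕ) : ℕ :=
  sInf { m : ℕ | 0 < walkCount μ m }

open Finset

lemma walk_finite {r : ℕ} (μ : Fin r → ℕ) (m : ℕ) : Finite {t : Fin r → ℕ // IsWalk μ m t} := by
  apply Finite.of_injective
    (fun t => (fun i => (⟨t.1 i, Nat.lt_succ_of_le (t.2.1 i)⟩ : Fin (μ i + 1))))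
  intro a b h
  apply Subtype.ext
  funext i
  exact congrArg Fin.val (congrFun h i)

lemma walkCount_pos {r : ℕ} (μ : Fin r → ℕ) (m : ℕ) :
    0 < walkCount μ m ↔ ∃ t, IsWalk μ m t := by
  have := walk_finite μ m
  rw [walkCount, Nat.card_pos_iff]
  constructor
  · rintro ⟨⟨t, ht⟩, -⟩; exact ⟨t, ht⟩
  · rintro ⟨t, ht⟩; exact ⟨⟨⟨t, ht⟩⟩, this⟩

lemma minDefects_eq {r : ℕ} (μ : Fin r → ℕ) :
    minDefects μ = sInf { m : ℕ | ∃ t, IsWalk μ m t } := by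
  unfold minDefects
  congr 1
  ext m
  exact walkCount_pos μ m

lemma zero_walk {r : ℕ} (μ : Fin r → ℕ) : IsWalk μ (∑ i, μ i) (fun _ => 0) := by
  refine ⟨fun i => Nat.zero_le _, fun j => ?_, ?_⟩
  · simp only [Nat.cast_zero, CharP.cast_eq_zero, mul_zero, sub_zero]
    exact Finset.sum_nonneg fun i _ => by positivity
  · push_cast; simp

lemma walk_total {r : ℕ} {μ : Fin r → ℕ} {m : ℕ} {t : Fin r → ℕ} (h : IsWalk μ m t) :
    ∃ c : ℕ, (m : ℤ) = ∑ i, (μ i : ℤ) - 2 * c := by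
  refine ⟨∑ i, t i, ?_⟩
  rw [← h.2.2]
  push_cast
  rw [Finset.sum_sub_distrib, ← Finset.mul_sum]

lemma walk_step {r : ℕ} {μ : Fin r → ℕ} {m : ℕ} (h : ∃ t, IsWalk μ m t)
    (hm : m + 2 ≤ ∑ i, μ i) : ∃ t, IsWalk μ (m + 2) t := by
  obtain ⟨t, ht⟩ := h
  have hpos : ∃ i₀, 0 < t i₀ := by
    by_contra hc
    push_neg at hc
    have hz : ∀ i, t i = 0 := fun i => Nat.le_zero.mp (hc i)
    have h2 := ht.2.2
    have htot : (∑ i : Fin r, ((μ i : ℤ) - 2 * (t i : ℤ))) = ∑ i, (μ i : ℤ) :=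
      Finset.sum_congr rfl fun i _ => by simp [hz i]
    rw [htot] at h2
    have hc2 : ((∑ i, μ i : ℕ) : ℤ) = (m : ℤ) := by push_cast; exact h2
    have : (∑ i, μ i) = m := Nat.cast_injective hc2
    omega
  obtain ⟨i₀, hi₀⟩ := hpos
  set t' : Fin r → ℕ := Function.update t i₀ (t i₀ - 1) with ht'
  have hle : ∀ i, t' i ≤ t i := by
    intro i
    rcases eq_or_ne i i₀ with rfl | hne
    · simp only [ht', Function.update_self]; omega
    · simp [ht', Function.update_of_ne hne]
  have hsum : ∀ S : Finset (Fin r), i₀ ∈ S →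
      ∑ i ∈ S, ((μ i : ℤ) - 2 * (t' i : ℤ)) = (∑ i ∈ S, ((μ i : ℤ) - 2 * (t i : ℤ))) + 2 := by
    intro S hS
    rw [← Finset.add_sum_erase S _ hS,
        ← Finset.add_sum_erase S (fun i => ((μ i : ℤ) - 2 * (t i : ℤ))) hS]
    have he : ∑ i ∈ S.erase i₀, ((μ i : ℤ) - 2 * (t' i : ℤ))
        = ∑ i ∈ S.erase i₀, ((μ i : ℤ) - 2 * (t i : ℤ)) := by
      refine Finset.sum_congr rfl fun i hi => ?_
      rw [ht', Function.update_of_ne (Finset.ne_of_mem_erase hi)]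
    rw [he]
    have h1 : (t' i₀ : ℤ) = (t i₀ : ℤ) - 1 := by
      rw [ht', Function.update_self]
      have h1' : (1 : ℕ) ≤ t i₀ := hi₀
      push_cast [h1']
      ring
    rw [h1]; ring
  have hmono : ∀ S : Finset (Fin r),
      ∑ i ∈ S, ((μ i : ℤ) - 2 * (t i : ℤ)) ≤ ∑ i ∈ S, ((μ i : ℤ) - 2 * (t' i : ℤ)) := by
    intro S
    by_cases hS : i₀ ∈ S
    · rw [hsum S hS]; omega
    · apply le_of_eq
      refine Finset.sum_congr rfl fun i hi => ?_
      have hne : i ≠ i₀ := fun hx => hS (hx ▸ hi)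
      rw [ht', Function.update_of_ne hne]
  refine ⟨t', fun i => le_trans (hle i) (ht.1 i), fun j => ?_, ?_⟩
  · have := ht.2.1 j
    have h2 : (t' j : ℤ) ≤ (t j : ℤ) := by exact_mod_cast hle j
    exact le_trans h2 (le_trans this (hmono _))
  · rw [hsum Finset.univ (Finset.mem_univ i₀), ht.2.2]
    push_cast
    ring

lemma walk_fill {r : ℕ} {μ : Fin r → ℕ} {m : ℕ} (h : ∃ t, IsWalk μ m t) :
    ∀ j : ℕ, m + 2 * j ≤ ∑ i, μ i → ∃ t, IsWalk μ (m + 2 * j) t := by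
  intro j
  induction j with
  | zero => intro _; simpa using h
  | succ k ih =>
    intro hle
    have h1 : m + 2 * k ≤ ∑ i, μ i := by omega
    have h2 := walk_step (ih h1) (by omega)
    have : m + 2 * (k + 1) = m + 2 * k + 2 := by ring
    rwa [this]

open Finset

lemma sum_filter_lt_last {r : ℕ} (f : Fin (r+1) → ℤ) :
    ∑ i ∈ Finset.univ.filter (fun i : Fin (r+1) => i < Fin.last r), f i
      = ∑ i : Fin r, f i.castSucc := by
  have h1 : Finset.univ.filter (fun i : Fin (r+1) => i < Fin.last r)
      = Finset.univ.erase (Fin.last r) := by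
    ext i
    simp only [Finset.mem_filter, Finset.mem_univ, true_and, Finset.mem_erase, and_true]
    rw [Fin.lt_def]
    simp only [ne_eq, Fin.ext_iff, Fin.val_last]
    have := i.isLt
    omega
  rw [h1, Finset.sum_erase_eq_sub (Finset.mem_univ _), Fin.sum_univ_castSucc]
  ring

lemma sum_filter_lt_castSucc {r : ℕ} (f : Fin (r+1) → ℤ) (j : Fin r) :
    ∑ i ∈ Finset.univ.filter (fun i : Fin (r+1) => i < j.castSucc), f i
      = ∑ i ∈ Finset.univ.filter (fun i : Fin r => i < j), f i.castSucc := by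
  have h1 : Finset.univ.filter (fun i : Fin (r+1) => i < j.castSucc)
      = (Finset.univ.filter (fun i : Fin r => i < j)).map Fin.castSuccEmb := by
    ext i
    simp only [Finset.mem_filter, Finset.mem_univ, true_and, Finset.mem_map]
    constructor
    · intro hi
      have hlt : i < Fin.last r := hi.trans (Fin.castSucc_lt_last j)
      refine ⟨i.castPred hlt.ne, ?_, ?_⟩
      · rw [← Fin.castSucc_lt_castSucc_iff, Fin.castSucc_castPred]
        exact hi
      · simp only [Fin.coe_castSuccEmb]
        exact Fin.castSucc_castPred i hlt.ne
    · rintro ⟨a, ha, rfl⟩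
      simp only [Fin.coe_castSuccEmb]
      exact Fin.castSucc_lt_castSucc_iff.mpr ha
  rw [h1, Finset.sum_map]
  apply Finset.sum_congr rfl
  intro i _
  simp only [Fin.coe_castSuccEmb]

lemma walk_split {r : ℕ} (μ : Fin (r+1) → ℕ) (m : ℕ) :
    (∃ t, IsWalk μ m t) ↔
      ∃ mh k : ℕ, (∃ th, IsWalk (μ ∘ Fin.castSucc) mh th) ∧ k ≤ μ (Fin.last r) ∧
        (k : ℤ) ≤ (mh : ℤ) ∧ (m : ℤ) = (mh : ℤ) + (μ (Fin.last r) : ℤ) - 2 * k := by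
  constructor
  · rintro ⟨t, h1, h2, h3⟩
    have hlast := h2 (Fin.last r)
    rw [sum_filter_lt_last] at hlast
    set Mh : ℤ := ∑ i : Fin r, ((μ i.castSucc : ℤ) - 2 * (t i.castSucc : ℤ)) with hMh
    have hnn : (0:ℤ) ≤ Mh := le_trans (by positivity) hlast
    have hMc : (Mh.toNat : ℤ) = Mh := Int.toNat_of_nonneg hnn
    refine ⟨Mh.toNat, t (Fin.last r), ⟨t ∘ Fin.castSucc, ?_, ?_, ?_⟩, h1 _, ?_, ?_⟩
    · intro i; exact h1 _
    · intro j
      have := h2 j.castSucc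
      rw [sum_filter_lt_castSucc] at this
      simpa [Function.comp] using this
    · rw [hMc]
      simp only [Function.comp]
      rfl
    · rw [hMc]; exact hlast
    · have h4 := h3
      rw [Fin.sum_univ_castSucc] at h4
      rw [hMc]
      rw [← hMh] at h4
      omega
  · rintro ⟨mh, k, ⟨th, hh1, hh2, hh3⟩, hk1, hk2, hm⟩
    have hsnoc : ∀ i : Fin r, (Fin.snoc th k : Fin (r+1) → ℕ) i.castSucc = th i :=
      fun i => by simp
    have hsum : ∑ i : Fin r, ((μ i.castSucc : ℤ)
          - 2 * (((Fin.snoc th k : Fin (r+1) → ℕ) i.castSucc : ℕ) : ℤ)) = (mh : ℤ) := by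
      rw [← hh3]
      exact Finset.sum_congr rfl fun i _ => by rw [hsnoc i]; rfl
    refine ⟨Fin.snoc th k, ?_, ?_, ?_⟩
    · intro i
      refine Fin.lastCases ?_ ?_ i
      · rw [Fin.snoc_last]; exact hk1
      · intro j; rw [Fin.snoc_castSucc]; exact hh1 j
    · intro j
      refine Fin.lastCases ?_ ?_ j
      · rw [sum_filter_lt_last, Fin.snoc_last, hsum]
        exact hk2
      · intro j'
        rw [sum_filter_lt_castSucc, Fin.snoc_castSucc]
        have h5 := hh2 j'
        have h6 : ∑ i ∈ Finset.univ.filter (fun i : Fin r => i < j'),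
              ((μ i.castSucc : ℤ) - 2 * (((Fin.snoc th k : Fin (r+1) → ℕ) i.castSucc : ℕ) : ℤ))
            = ∑ i ∈ Finset.univ.filter (fun i : Fin r => i < j'),
              (((μ ∘ Fin.castSucc) i : ℤ) - 2 * (th i : ℤ)) :=
          Finset.sum_congr rfl fun i _ => by rw [hsnoc i]; rfl
        rw [h6]
        exact h5
    · rw [Fin.sum_univ_castSucc, Fin.snoc_last, hsum]
      omega



lemma minDefects_mem {r : ℕ} (μ : Fin r → ℕ) : ∃ t, IsWalk μ (minDefects μ) t := by
  have h : minDefects μ ∈ { m : ℕ | ∃ t, IsWalk μ m t} := by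
    rw [minDefects_eq]
    exact Nat.sInf_mem ⟨∑ i, μ i, ⟨_, zero_walk μ⟩⟩
  exact h

lemma minDefects_le {r : ℕ} (μ : Fin r → ℕ) {m : ℕ} (h : ∃ t, IsWalk μ m t) :
    minDefects μ ≤ m := by
  rw [minDefects_eq]
  exact Nat.sInf_le h

/-- Recursion for the minimal defect number `s_μ`: `s_{(n)} = n`, and removing
the last part `μ_r` (with `μ̂` the truncated composition):
`s_μ = s_{μ̂} − μ_r` if `μ_r ≤ s_{μ̂}`; `s_μ = (s_{μ̂} − μ_r) mod 2` if
`s_{μ̂} < μ_r < |μ̂|`; and `s_μ = μ_r − |μ̂|` if `|μ̂| ≤ μ_r`. -/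
theorem minDefects_recursion :
    (∀ n : ℕ, minDefects (fun _ : Fin 1 => n) = n) ∧
    (∀ r : ℕ, 1 ≤ r → ∀ μ : Fin (r + 1) → ℕ,
      (μ (Fin.last r) ≤ minDefects (μ ∘ Fin.castSucc) →
        minDefects μ = minDefects (μ ∘ Fin.castSucc) - μ (Fin.last r)) ∧
      (minDefects (μ ∘ Fin.castSucc) < μ (Fin.last r) →
        μ (Fin.last r) < ∑ i : Fin r, μ (Fin.castSucc i) →
        (minDefects μ : ℤ)
          = ((minDefects (μ ∘ Fin.castSucc) : ℤ) - (μ (Fin.last r) : ℤ)) % 2) ∧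
      (∑ i : Fin r, μ (Fin.castSucc i) ≤ μ (Fin.last r) →
        minDefects μ = μ (Fin.last r) - ∑ i : Fin r, μ (Fin.castSucc i))) := by
  constructor
  · intro n
    rw [minDefects_eq]
    have hset : {m : ℕ | ∃ t, IsWalk (fun _ : Fin 1 => n) m t} = {n} := by
      ext m
      simp only [Set.mem_setOf_eq, Set.mem_singleton_iff]
      constructor
      · rintro ⟨t, h1, h2, h3⟩
        have h0 := h2 0
        have hemp : Finset.univ.filter (fun i : Fin 1 => i < (0 : Fin 1)) = ∅ := by
          ext i
          simp only [Finset.mem_filter, Finset.mem_univ, true_and, Finset.notMem_empty,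
            iff_false]
          rw [Fin.lt_def]
          omega
        rw [hemp, Finset.sum_empty] at h0
        have ht0 : t 0 = 0 := by
          have : (t 0 : ℤ) = 0 := le_antisymm h0 (by positivity)
          exact_mod_cast this
        rw [Fin.sum_univ_one, ht0] at h3
        have : (n : ℤ) = (m : ℤ) := by push_cast at h3; linarith
        exact_mod_cast this.symm
      · intro hm
        rw [hm]
        refine ⟨fun _ => 0, ?_⟩
        have := zero_walk (fun _ : Fin 1 => n)
        simpa using this
    rw [hset]
    exact csInf_singleton n
  · intro r hr μ
    set ν : Fin r → ℕ := μ ∘ Fin.castSucc with hν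
    set L : ℕ := μ (Fin.last r) with hL
    set N : ℕ := ∑ i : Fin r, μ (Fin.castSucc i) with hN
    have hNν : ∑ i, ν i = N := rfl
    set s : ℕ := minDefects ν with hs
    obtain ⟨ts, hts⟩ := minDefects_mem ν
    obtain ⟨c₀, hc₀⟩ := walk_total hts
    have hsum_cast : ∑ i : Fin r, (ν i : ℤ) = (N : ℤ) := by
      rw [← hNν]; push_cast; rfl
    rw [hsum_cast] at hc₀
    have key : ∀ m : ℕ, (∃ t, IsWalk μ m t) → ∃ mh k c : ℕ, k ≤ L ∧ (k : ℤ) ≤ (mh : ℤ) ∧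
        (m : ℤ) = (mh : ℤ) + (L : ℤ) - 2 * k ∧ s ≤ mh ∧ (mh : ℤ) = (N : ℤ) - 2 * c := by
      intro m hm
      obtain ⟨mh, k, hwh, hk1, hk2, hm'⟩ := (walk_split μ m).mp hm
      obtain ⟨th, hth⟩ := hwh
      obtain ⟨c, hc⟩ := walk_total hth
      rw [hsum_cast] at hc
      exact ⟨mh, k, c, hk1, hk2, hm', minDefects_le ν ⟨th, hth⟩, hc⟩
    have build : ∀ mh k : ℕ, (∃ th, IsWalk ν mh th) → k ≤ L → (k : ℤ) ≤ (mh : ℤ) →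
        ∃ m : ℕ, (m : ℤ) = (mh : ℤ) + (L : ℤ) - 2 * k ∧ minDefects μ ≤ m := by
      intro mh k hth hk1 hk2
      have hm0 : (0 : ℤ) ≤ (mh : ℤ) + (L : ℤ) - 2 * k := by omega
      refine ⟨((mh : ℤ) + (L : ℤ) - 2 * k).toNat, Int.toNat_of_nonneg hm0, ?_⟩
      apply minDefects_le
      rw [walk_split]
      exact ⟨mh, k, hth, hk1, hk2, by rw [Int.toNat_of_nonneg hm0]⟩
    refine ⟨?_, ?_, ?_⟩
    · -- case 1 : L ≤ s
      intro h
      obtain ⟨m1, hm1, hle1⟩ := build s L ⟨ts, hts⟩ le_rfl (by exact_mod_cast h)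
      obtain ⟨mh, k, c, hk1, hk2, hmeq, hsh, hc⟩ := key (minDefects μ) (minDefects_mem μ)
      omega
    · -- case 2 : s < L < N
      intro h1 h2
      have hbld : ∃ m1 : ℕ, m1 ≤ 1 ∧ ((m1 : ℤ) - ((s : ℤ) - L)) % 2 = 0 ∧ minDefects μ ≤ m1 := by
        rcases Nat.even_or_odd (L - s) with ⟨d, hd⟩ | ⟨d, hd⟩
        · have hsd : s + 2 * d = L := by omega
          obtain ⟨t2, ht2⟩ := walk_fill ⟨ts, hts⟩ d (by rw [hNν]; omega)
          obtain ⟨m1, hm1, hle1⟩ := build (s + 2 * d) L ⟨t2, ht2⟩ le_rfl (by push_cast; omega)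
          exact ⟨m1, by omega, by omega, hle1⟩
        · have hsd : s + 2 * (d + 1) = L + 1 := by omega
          obtain ⟨t2, ht2⟩ := walk_fill ⟨ts, hts⟩ (d + 1) (by rw [hNν]; omega)
          obtain ⟨m1, hm1, hle1⟩ := build (s + 2 * (d + 1)) L ⟨t2, ht2⟩ le_rfl
            (by push_cast; omega)
          exact ⟨m1, by omega, by omega, hle1⟩
      obtain ⟨m1, hm11, hm1p, hle1⟩ := hbld
      obtain ⟨mh, k, c, hk1, hk2, hmeq, hsh, hc⟩ := key (minDefects μ) (minDefects_mem μ)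
      omega
    · -- case 3 : N ≤ L
      intro h
      have hzw : ∃ th, IsWalk ν N th := by
        refine ⟨fun _ => 0, ?_⟩
        have := zero_walk ν
        rwa [hNν] at this
      obtain ⟨m1, hm1, hle1⟩ := build N N hzw h (by omega)
      obtain ⟨mh, k, c, hk1, hk2, hmeq, hsh, hc⟩ := key (minDefects μ) (minDefects_mem μ)
      omega
end

section
/- Fix integers ℓ ≥ 2 and p ≥ 2, and let n be a natural number with n+1 = Σ_{i=0}^r n_i·p^{(i)} its (ℓ,p)-digit expansion (n_r ≠ 0). Let J = { 0 ≤ i ≤ r−1 : n_i ≠ 0 }. Then the map S ↦ n[S] = n − 2·Σ_{i∈S} n_i·p^{(i)} is injective on subsets S ⊆ J; consequently the cardinality of supp(n) is exactly 2^{g(n)}. -/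
/-- `p^{(i)}`: `p^{(0)} = 1` and `p^{(i)} = ℓ·p^{i−1}` for `i ≥ 1`. -/
def plpow (ℓ p i : ℕ) : ℕ := if i = 0 then 1 else ℓ * p ^ (i - 1)

/-- The `i`-th `(ℓ,p)`-digit of `N`, so that `N = ∑ i, pldig ℓ p N i * plpow ℓ p i`
with `0 ≤ N_0 < ℓ` and `0 ≤ N_i < p` for `i ≥ 1`. -/
def pldig (ℓ p N i : ℕ) : ℕ := if i = 0 then N % ℓ else (N / ℓ / p ^ (i - 1)) % p

/-- `n[S] = n − 2·∑_{i ∈ S} n_i·p^{(i)}`, where `n_i` are the `(ℓ,p)`-digits of `n+1`. -/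
def nSub (ℓ p n : ℕ) (S : Finset ℕ) : ℕ :=
  n - 2 * ∑ i ∈ S, pldig ℓ p (n + 1) i * plpow ℓ p i

lemma plpow_pos (ℓ p : ℕ) (hℓ : 2 ≤ ℓ) (hp : 2 ≤ p) (k : ℕ) : 0 < plpow ℓ p k := by
  unfold plpow; split
  · exact one_pos
  · exact Nat.mul_pos (by omega) (Nat.pow_pos (by omega))

lemma pldig_eq (ℓ p N k : ℕ) :
    pldig ℓ p N k = N / plpow ℓ p k % (if k = 0 then ℓ else p) := by
  unfold pldig plpow
  rcases Nat.eq_zero_or_pos k with hk | hk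
  · simp [hk]
  · rw [if_neg (by omega), if_neg (by omega), if_neg (by omega), Nat.div_div_eq_div_mul]

lemma digit_sum (ℓ p N : ℕ) (k : ℕ) :
    ∑ i ∈ Finset.range k, pldig ℓ p N i * plpow ℓ p i = N % plpow ℓ p k := by
  induction k with
  | zero => simp [plpow, Nat.mod_one]
  | succ k ih =>
    rw [Finset.sum_range_succ, ih]
    rcases Nat.eq_zero_or_pos k with hk | hk
    · subst hk; simp [plpow, pldig, Nat.mod_one]
    · have hP : plpow ℓ p (k + 1) = plpow ℓ p k * p := by
        unfold plpow
        rw [if_neg (by omega), if_neg (by omega)]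
        rw [mul_assoc, ← pow_succ]
        congr 2
        omega
      have hd : pldig ℓ p N k = N / plpow ℓ p k % p := by
        rw [pldig_eq, if_neg (by omega)]
      rw [hP, hd, Nat.mod_mul]
      ring

/-- Sums of digit-masked values are injective on subsets of nonzero positions. -/
lemma masked_inj (ℓ p N : ℕ) (hℓ : 2 ≤ ℓ) (hp : 2 ≤ p) :
    ∀ k (S T : Finset ℕ),
      S ⊆ (Finset.range k).filter (fun i => pldig ℓ p N i ≠ 0) →
      T ⊆ (Finset.range k).filter (fun i => pldig ℓ p N i ≠ 0) →
      (∑ i ∈ S, pldig ℓ p N i * plpow ℓ p i = ∑ i ∈ T, pldig ℓ p N i * plpow ℓ p i) →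
      S = T := by
  intro k
  induction k with
  | zero =>
    intro S T hS hT _
    simp only [Finset.range_zero, Finset.filter_empty, Finset.subset_empty] at hS hT
    rw [hS, hT]
  | succ k ih =>
    -- helper: being a subset of the filtered range, avoiding k, puts us in range k
    have hsub : ∀ (U : Finset ℕ),
        U ⊆ (Finset.range (k+1)).filter (fun i => pldig ℓ p N i ≠ 0) → k ∉ U →
        U ⊆ (Finset.range k).filter (fun i => pldig ℓ p N i ≠ 0) := by
      intro U hU hk a ha
      have := hU ha
      simp only [Finset.mem_filter, Finset.mem_range] at this ⊢
      refine ⟨?_, this.2⟩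
      have : a < k + 1 := this.1
      have : a ≠ k := fun h => hk (h ▸ ha)
      omega
    -- helper: any sum over a subset of filtered range k is < plpow k
    have hlt : ∀ (U : Finset ℕ),
        U ⊆ (Finset.range k).filter (fun i => pldig ℓ p N i ≠ 0) →
        ∑ i ∈ U, pldig ℓ p N i * plpow ℓ p i < plpow ℓ p k := by
      intro U hU
      calc ∑ i ∈ U, pldig ℓ p N i * plpow ℓ p i
          ≤ ∑ i ∈ Finset.range k, pldig ℓ p N i * plpow ℓ p i := by
            apply Finset.sum_le_sum_of_subset
            intro a ha
            exact (Finset.mem_filter.mp (hU ha)).1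
        _ = N % plpow ℓ p k := digit_sum ℓ p N k
        _ < plpow ℓ p k := Nat.mod_lt _ (plpow_pos ℓ p hℓ hp k)
    -- helper: if k ∈ U then sum over U is ≥ plpow k
    have hge : ∀ (U : Finset ℕ),
        U ⊆ (Finset.range (k+1)).filter (fun i => pldig ℓ p N i ≠ 0) → k ∈ U →
        plpow ℓ p k ≤ ∑ i ∈ U, pldig ℓ p N i * plpow ℓ p i := by
      intro U hU hk
      have hd : pldig ℓ p N k ≠ 0 := (Finset.mem_filter.mp (hU hk)).2
      calc plpow ℓ p k ≤ pldig ℓ p N k * plpow ℓ p k := by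
            nlinarith [plpow_pos ℓ p hℓ hp k, Nat.one_le_iff_ne_zero.mpr hd]
        _ ≤ ∑ i ∈ U, pldig ℓ p N i * plpow ℓ p i :=
            Finset.single_le_sum (f := fun i => pldig ℓ p N i * plpow ℓ p i)
              (fun i _ => Nat.zero_le _) hk
    intro S T hS hT hsum
    by_cases hkS : k ∈ S <;> by_cases hkT : k ∈ T
    · -- both contain k : erase and recurse
      have hS' : S.erase k ⊆ (Finset.range k).filter (fun i => pldig ℓ p N i ≠ 0) :=
        hsub _ (Finset.Subset.trans (Finset.erase_subset _ _) hS) (Finset.notMem_erase _ _)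
      have hT' : T.erase k ⊆ (Finset.range k).filter (fun i => pldig ℓ p N i ≠ 0) :=
        hsub _ (Finset.Subset.trans (Finset.erase_subset _ _) hT) (Finset.notMem_erase _ _)
      have hsum' : ∑ i ∈ S.erase k, pldig ℓ p N i * plpow ℓ p i
          = ∑ i ∈ T.erase k, pldig ℓ p N i * plpow ℓ p i := by
        rw [← Finset.add_sum_erase _ _ hkS, ← Finset.add_sum_erase _ _ hkT] at hsum
        omega
      have := ih (S.erase k) (T.erase k) hS' hT' hsum'
      rw [← Finset.insert_erase hkS, ← Finset.insert_erase hkT, this]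
    · -- k ∈ S, k ∉ T: contradiction
      exact absurd hsum (by
        have h1 := hge S hS hkS
        have h2 := hlt T (hsub T hT hkT)
        omega)
    · -- k ∉ S, k ∈ T: contradiction
      exact absurd hsum (by
        have h1 := hge T hT hkT
        have h2 := hlt S (hsub S hS hkS)
        omega)
    · exact ih S T (hsub S hS hkS) (hsub T hT hkT) hsum

/-- No truncation happens in `nSub` for subsets of `range r` when digit `r` is nonzero. -/
lemma nSub_bound (ℓ p n r : ℕ) (hℓ : 2 ≤ ℓ) (hp : 2 ≤ p)
    (hr : pldig ℓ p (n + 1) r ≠ 0) (S : Finset ℕ) (hS : S ⊆ Finset.range r) :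
    2 * ∑ i ∈ S, pldig ℓ p (n + 1) i * plpow ℓ p i ≤ n := by
  set N := n + 1 with hN
  have h1 : ∑ i ∈ S, pldig ℓ p N i * plpow ℓ p i ≤ N % plpow ℓ p r := by
    rw [← digit_sum ℓ p N r]
    exact Finset.sum_le_sum_of_subset hS
  have hPpos : 0 < plpow ℓ p r := plpow_pos ℓ p hℓ hp r
  have hdivpos : 0 < N / plpow ℓ p r := by
    rw [pldig_eq] at hr
    by_contra h
    simp only [Nat.not_lt, Nat.le_zero] at h
    rw [h] at hr
    simp at hr
  have hmod : plpow ℓ p r * (N / plpow ℓ p r) + N % plpow ℓ p r = N := Nat.div_add_mod N _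
  have hmodlt : N % plpow ℓ p r < plpow ℓ p r := Nat.mod_lt _ hPpos
  have : plpow ℓ p r + N % plpow ℓ p r ≤ N := by nlinarith
  omega

/-- The map `S ↦ n[S]` is injective on subsets of the nonzero digit positions
of `n+1` below the top digit `r`; consequently `supp(n)` has exactly `2^{g(n)}`
elements, where `g(n)` is one less than the number of nonzero digits of `n+1`. -/
theorem nSub_injective_card_supp (ℓ p n r : ℕ) (hℓ : 2 ≤ ℓ) (hp : 2 ≤ p)
    (hr : pldig ℓ p (n + 1) r ≠ 0)
    (htop : ∀ i, r < i → pldig ℓ p (n + 1) i = 0) :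
    Set.InjOn (fun S : Finset ℕ => nSub ℓ p n S)
      (((Finset.range r).filter (fun i => pldig ℓ p (n + 1) i ≠ 0)).powerset :
        Finset (Finset ℕ)) ∧
    ((Finset.range r).powerset.image (fun S => nSub ℓ p n S)).card
      = 2 ^ ((((Finset.range (r + 1)).filter (fun i => pldig ℓ p (n + 1) i ≠ 0)).card) - 1) := by
  set J : Finset ℕ := (Finset.range r).filter (fun i => pldig ℓ p (n + 1) i ≠ 0) with hJ
  have hJsub : J ⊆ Finset.range r := Finset.filter_subset _ _
  have hinj : Set.InjOn (fun S : Finset ℕ => nSub ℓ p n S) (J.powerset : Finset (Finset ℕ)) := by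
    intro S hS T hT h
    simp only [Finset.coe_powerset, Set.mem_preimage, Set.mem_powerset_iff,
      Finset.coe_subset] at hS hT
    have hS' : S ⊆ J := by exact_mod_cast hS
    have hT' : T ⊆ J := by exact_mod_cast hT
    have hb1 := nSub_bound ℓ p n r hℓ hp hr S (hS'.trans hJsub)
    have hb2 := nSub_bound ℓ p n r hℓ hp hr T (hT'.trans hJsub)
    simp only [nSub] at h
    have hsum : ∑ i ∈ S, pldig ℓ p (n + 1) i * plpow ℓ p i
        = ∑ i ∈ T, pldig ℓ p (n + 1) i * plpow ℓ p i := by omega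
    exact masked_inj ℓ p (n + 1) hℓ hp r S T hS' hT' hsum
  refine ⟨hinj, ?_⟩
  -- the image over all subsets of range r equals the image over subsets of J
  have himg : (Finset.range r).powerset.image (fun S => nSub ℓ p n S)
      = J.powerset.image (fun S => nSub ℓ p n S) := by
    apply Finset.Subset.antisymm
    · intro x hx
      obtain ⟨S, hS, rfl⟩ := Finset.mem_image.mp hx
      rw [Finset.mem_powerset] at hS
      refine Finset.mem_image.mpr ⟨S.filter (fun i => pldig ℓ p (n + 1) i ≠ 0), ?_, ?_⟩
      · rw [Finset.mem_powerset, hJ]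
        exact Finset.filter_subset_filter _ hS
      · unfold nSub
        congr 2
        exact Finset.sum_filter_of_ne (fun x _ hx => by
          intro h0
          apply hx
          rw [h0, zero_mul])
    · exact Finset.image_subset_image (Finset.powerset_mono.mpr hJsub)
  rw [himg, Finset.card_image_of_injOn hinj, Finset.card_powerset]
  congr 1
  have hfins : (Finset.range (r + 1)).filter (fun i => pldig ℓ p (n + 1) i ≠ 0)
      = insert r J := by
    rw [Finset.range_add_one, Finset.filter_insert, if_pos hr]
  rw [hfins, Finset.card_insert_of_notMem (fun h => by
    have := hJsub h
    simp at this)]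
  omega
end

section
/- Fix integers ℓ ≥ 2 and p ≥ 2, and let n have (ℓ,p)-digits n+1 = Σ_{i=0}^r n_i·p^{(i)} with n_r ≠ 0. Let T_n = { 0 ≤ t ≤ r−1 : n has a tail of length t and n_t = 1 }. Then the number of pairs (m, m+2) with both m and m+2 in supp(n) equals Σ_{t ∈ T_n} 2^{g(n)−t−1}. In particular, if T_n is empty (n is 'interior'), then no two elements of supp(n) differ by exactly 2. -/
/-- `n` has a tail of length `t`: all `(ℓ,p)`-digits of `n+1` at positions below
`t` are maximal, i.e. `n_0 = ℓ−1` and `n_i = p−1` for `0 < i < t`. -/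
def hasTail (ℓ p n t : ℕ) : Prop :=
  ∀ i, i < t → pldig ℓ p (n + 1) i = (if i = 0 then ℓ else p) - 1

instance (ℓ p n t : ℕ) : Decidable (hasTail ℓ p n t) :=
  inferInstanceAs (Decidable (∀ i, i < t → pldig ℓ p (n + 1) i = (if i = 0 then ℓ else p) - 1))

namespace PLAux

def w (ℓ p N i : ℕ) : ℕ := pldig ℓ p N i * plpow ℓ p i

lemma plpow_pos {ℓ p : ℕ} (hℓ : 2 ≤ ℓ) (hp : 2 ≤ p) (i : ℕ) : 0 < plpow ℓ p i := by
  unfold plpow; split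
  · norm_num
  · exact Nat.mul_pos (by omega) (Nat.pow_pos (by omega))

lemma plpow_succ {ℓ p : ℕ} (k : ℕ) :
    plpow ℓ p (k + 1) = (if k = 0 then ℓ else p) * plpow ℓ p k := by
  unfold plpow
  rcases Nat.eq_zero_or_pos k with h | h
  · subst h; simp
  · have hk : ¬ (k = 0) := by omega
    simp only [hk, if_neg, Nat.add_eq_zero, and_false, ite_false]
    rw [show k + 1 - 1 = (k-1) + 1 by omega, pow_succ]
    simp; ring

lemma dig_lt {ℓ p : ℕ} (hℓ : 2 ≤ ℓ) (hp : 2 ≤ p) (N i : ℕ) :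
    pldig ℓ p N i < if i = 0 then ℓ else p := by
  unfold pldig; split
  · exact Nat.mod_lt _ (by omega)
  · exact Nat.mod_lt _ (by omega)

lemma baseP {p : ℕ} (hp : 2 ≤ p) (M : ℕ) : ∀ k,
    M = (∑ j ∈ Finset.range k, (M / p ^ j % p) * p ^ j) + M / p ^ k * p ^ k := by
  intro k
  induction k with
  | zero => simp
  | succ k ih =>
    rw [Finset.sum_range_succ]
    have h1 : M / p ^ k = M / p ^ k % p + p * (M / p ^ (k+1)) := by
      rw [pow_succ, ← Nat.div_div_eq_div_mul]
      exact (Nat.mod_add_div _ _).symm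
    have h2 : M / p ^ k * p ^ k
        = M / p ^ k % p * p ^ k + M / p ^ (k+1) * p ^ (k+1) := by
      conv_lhs => rw [h1]
      ring
    omega
  
lemma expand {ℓ p : ℕ} (hℓ : 2 ≤ ℓ) (hp : 2 ≤ p) (N k : ℕ) :
    N = (∑ i ∈ Finset.range (k + 1), w ℓ p N i) + ℓ * (N / ℓ / p ^ k) * p ^ k := by
  have h0 : N = N % ℓ + ℓ * (N / ℓ) := (Nat.mod_add_div _ _).symm
  have hb := baseP hp (N / ℓ) k
  have hsum : ∑ i ∈ Finset.range (k + 1), w ℓ p N i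
      = (∑ j ∈ Finset.range k, (N / ℓ / p ^ j % p) * (ℓ * p ^ j)) + N % ℓ := by
    rw [Finset.sum_range_succ']
    have e1 : ∀ j ∈ Finset.range k, w ℓ p N (j+1) = (N / ℓ / p ^ j % p) * (ℓ * p ^ j) := by
      intro j _; simp [w, pldig, plpow]
    rw [Finset.sum_congr rfl e1]
    simp [w, pldig, plpow]
  rw [hsum]
  have h3 : ∑ j ∈ Finset.range k, (N / ℓ / p ^ j % p) * (ℓ * p ^ j)
      = ℓ * ∑ j ∈ Finset.range k, (N / ℓ / p ^ j % p) * p ^ j := by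
    rw [Finset.mul_sum]; apply Finset.sum_congr rfl; intros; ring
  calc N = N % ℓ + ℓ * (N / ℓ) := h0
  _ = N % ℓ + ℓ * ((∑ j ∈ Finset.range k, (N / ℓ / p ^ j % p) * p ^ j)
        + N / ℓ / p ^ k * p ^ k) := by rw [← hb]
  _ = _ := by rw [h3]; ring

lemma total {ℓ p N r : ℕ} (hℓ : 2 ≤ ℓ) (hp : 2 ≤ p)
    (htop : ∀ i, r < i → pldig ℓ p N i = 0) :
    N = ∑ i ∈ Finset.range (r + 1), w ℓ p N i := by
  have hmod : ∀ j, r ≤ j → (N / ℓ / p ^ j) % p = 0 := by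
    intro j hj
    have h := htop (j + 1) (by omega)
    simpa [pldig] using h
  have key : ∀ d, N / ℓ / p ^ (r + d) = 0 → N / ℓ / p ^ r = 0 := by
    intro d
    induction d with
    | zero => simpa using id
    | succ d ih =>
      intro h
      apply ih
      have h1 : N / ℓ / p ^ (r + d) / p = N / ℓ / p ^ (r + d + 1) := by
        rw [show r + d + 1 = (r + d) + 1 from rfl, pow_succ,
          ← Nat.div_div_eq_div_mul]
      have h2 := Nat.div_add_mod (N / ℓ / p ^ (r + d)) p
      rw [h1] at h2
      rw [show r + (d+1) = r + d + 1 by omega] at h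
      rw [h] at h2
      have h3 := hmod (r + d) (by omega)
      omega
  have hlt : N / ℓ / p ^ (r + N) = 0 := by
    apply Nat.div_eq_of_lt
    calc N / ℓ ≤ N := Nat.div_le_self _ _
    _ < 2 ^ N := Nat.lt_two_pow_self
    _ ≤ 2 ^ (r + N) := Nat.pow_le_pow_right (by omega) (by omega)
    _ ≤ p ^ (r + N) := Nat.pow_le_pow_left (by omega) _
  have hz : N / ℓ / p ^ r = 0 := key N hlt
  have := expand hℓ hp N r
  rw [hz] at this
  simpa using this

lemma sumw_lt {ℓ p : ℕ} (hℓ : 2 ≤ ℓ) (hp : 2 ≤ p) (N : ℕ) :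
    ∀ k, ∑ i ∈ Finset.range k, w ℓ p N i < plpow ℓ p k := by
  intro k
  induction k with
  | zero => simp [plpow]
  | succ k ih =>
    rw [Finset.sum_range_succ]
    have hd := dig_lt hℓ hp N k
    set c := if k = 0 then ℓ else p with hc
    have hc2 : 2 ≤ c := by rw [hc]; split <;> omega
    have hwk : w ℓ p N k ≤ (c - 1) * plpow ℓ p k :=
      Nat.mul_le_mul_right _ (by omega)
    calc ∑ i ∈ Finset.range k, w ℓ p N i + w ℓ p N k
        < plpow ℓ p k + (c - 1) * plpow ℓ p k := by omega
    _ = (c - 1 + 1) * plpow ℓ p k := by ring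
    _ = plpow ℓ p (k + 1) := by
        rw [show c - 1 + 1 = c by omega, ← plpow_succ]

lemma tail_sum {ℓ p N : ℕ} (hℓ : 2 ≤ ℓ) (hp : 2 ≤ p) :
    ∀ t, (∀ i, i < t → pldig ℓ p N i = (if i = 0 then ℓ else p) - 1) →
    ∑ i ∈ Finset.range t, w ℓ p N i = plpow ℓ p t - 1 := by
  intro t
  induction t with
  | zero => simp [plpow]
  | succ t ih =>
    intro h
    rw [Finset.sum_range_succ, ih (fun i hi => h i (by omega))]
    have hw : w ℓ p N t = ((if t = 0 then ℓ else p) - 1) * plpow ℓ p t := by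
      rw [w, h t (by omega)]
    set c := if t = 0 then ℓ else p with hc
    have hc2 : 2 ≤ c := by rw [hc]; split <;> omega
    have hpos := plpow_pos hℓ hp (p := p) (i := t)
    have hsucc : plpow ℓ p (t + 1) = c * plpow ℓ p t := plpow_succ t
    have h1 : (c - 1) * plpow ℓ p t = c * plpow ℓ p t - plpow ℓ p t :=
      Nat.sub_one_mul _ _
    have h2 : plpow ℓ p t ≤ c * plpow ℓ p t :=
      Nat.le_mul_of_pos_left _ (by omega)
    omega

lemma sum_eq_max {ℓ p N : ℕ} (hℓ : 2 ≤ ℓ) (hp : 2 ≤ p) :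
    ∀ t, ∑ i ∈ Finset.range t, w ℓ p N i = plpow ℓ p t - 1 →
    ∀ i, i < t → pldig ℓ p N i = (if i = 0 then ℓ else p) - 1 := by
  intro t
  induction t with
  | zero => intro _ i hi; omega
  | succ t ih =>
    intro h i hi
    rw [Finset.sum_range_succ] at h
    have hlt := sumw_lt hℓ hp N t
    have hd := dig_lt hℓ hp N t
    set c := if t = 0 then ℓ else p with hc
    have hc2 : 2 ≤ c := by rw [hc]; split <;> omega
    have hpos := plpow_pos hℓ hp (p := p) (i := t)
    have hsucc : plpow ℓ p (t + 1) = c * plpow ℓ p t := plpow_succ t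
    have hwk : w ℓ p N t ≤ (c - 1) * plpow ℓ p t :=
      Nat.mul_le_mul_right _ (by omega)
    have h1 : (c - 1) * plpow ℓ p t = c * plpow ℓ p t - plpow ℓ p t :=
      Nat.sub_one_mul _ _
    have h2 : plpow ℓ p t ≤ c * plpow ℓ p t :=
      Nat.le_mul_of_pos_left _ (by omega)
    have hsum : ∑ j ∈ Finset.range t, w ℓ p N j = plpow ℓ p t - 1 := by omega
    rcases Nat.lt_or_ge i t with h' | h'
    · exact ih hsum i h'
    · have hit : i = t := by omega
      subst hit
      have hwt : w ℓ p N i = (c - 1) * plpow ℓ p i := by omega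
      rw [w] at hwt
      rw [← hc]
      exact Nat.eq_of_mul_eq_mul_right (by omega) hwt

lemma winj {ℓ p : ℕ} (hℓ : 2 ≤ ℓ) (hp : 2 ≤ p) (N : ℕ) :
    ∀ k (S S' : Finset ℕ), S ⊆ Finset.range k → S' ⊆ Finset.range k →
    (∀ i ∈ S, w ℓ p N i ≠ 0) → (∀ i ∈ S', w ℓ p N i ≠ 0) →
    ∑ i ∈ S, w ℓ p N i = ∑ i ∈ S', w ℓ p N i → S = S' := by
  intro k
  induction k with
  | zero =>
    intro S S' hS hS' _ _ _
    simp only [Finset.range_zero, Finset.subset_empty] at hS hS'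
    rw [hS, hS']
  | succ k ih =>
    intro S S' hS hS' hnz hnz' hsum
    have hksub : ∀ (T : Finset ℕ), T ⊆ Finset.range (k+1) → k ∉ T →
        T ⊆ Finset.range k := by
      intro T hT hk i hi
      have hik := hT hi
      simp only [Finset.mem_range] at hik ⊢
      rcases Nat.lt_or_ge i k with h | h
      · exact h
      · exfalso; exact hk (by rwa [show i = k by omega] at hi)
    have wklow : ∀ (T : Finset ℕ), k ∈ T → (∀ i ∈ T, w ℓ p N i ≠ 0) →
        plpow ℓ p k ≤ ∑ i ∈ T, w ℓ p N i := by
      intro T hkT hnzT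
      have h1 : w ℓ p N k ≤ ∑ i ∈ T, w ℓ p N i :=
        Finset.single_le_sum (fun i _ => Nat.zero_le _) hkT
      have h2 : plpow ℓ p k ≤ w ℓ p N k := by
        have hne := hnzT k hkT
        rw [w] at hne ⊢
        have hd1 : 1 ≤ pldig ℓ p N k := by
          rcases Nat.eq_zero_or_pos (pldig ℓ p N k) with h | h
          · exfalso; apply hne; rw [h]; ring
          · omega
        calc plpow ℓ p k = 1 * plpow ℓ p k := (one_mul _).symm
        _ ≤ _ := Nat.mul_le_mul_right _ hd1
      omega
    have whigh : ∀ (T : Finset ℕ), T ⊆ Finset.range k →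
        ∑ i ∈ T, w ℓ p N i < plpow ℓ p k := by
      intro T hT
      calc ∑ i ∈ T, w ℓ p N i ≤ ∑ i ∈ Finset.range k, w ℓ p N i :=
        Finset.sum_le_sum_of_subset hT
      _ < _ := sumw_lt hℓ hp N k
    by_cases hk : k ∈ S <;> by_cases hk' : k ∈ S'
    · have e1 : S = insert k (S.erase k) := (Finset.insert_erase hk).symm
      have e2 : S' = insert k (S'.erase k) := (Finset.insert_erase hk').symm
      have s1 : ∑ i ∈ S.erase k, w ℓ p N i + w ℓ p N k = ∑ i ∈ S, w ℓ p N i :=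
        Finset.sum_erase_add _ _ hk
      have s2 : ∑ i ∈ S'.erase k, w ℓ p N i + w ℓ p N k = ∑ i ∈ S', w ℓ p N i :=
        Finset.sum_erase_add _ _ hk'
      have heq := ih (S.erase k) (S'.erase k)
        (hksub _ (fun i hi => hS (Finset.erase_subset _ _ hi)) (Finset.notMem_erase _ _))
        (hksub _ (fun i hi => hS' (Finset.erase_subset _ _ hi)) (Finset.notMem_erase _ _))
        (fun i hi => hnz i (Finset.erase_subset _ _ hi))
        (fun i hi => hnz' i (Finset.erase_subset _ _ hi))
        (by omega)
      rw [e1, e2, heq]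
    · exfalso
      have := wklow S hk hnz
      have := whigh S' (hksub _ hS' hk')
      omega
    · exfalso
      have := wklow S' hk' hnz'
      have := whigh S (hksub _ hS hk)
      omega
    · exact ih S S' (hksub _ hS hk) (hksub _ hS' hk') hnz hnz' hsum

lemma subset_range_pred {k : ℕ} (T : Finset ℕ) (hT : T ⊆ Finset.range (k+1))
    (hk : k ∉ T) : T ⊆ Finset.range k := by
  intro i hi
  have hik := hT hi
  simp only [Finset.mem_range] at hik ⊢
  rcases Nat.lt_or_ge i k with h | h
  · exact h
  · exfalso; exact hk (by rwa [show i = k by omega] at hi)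

lemma w_low {ℓ p N i : ℕ} (h : w ℓ p N i ≠ 0) : plpow ℓ p i ≤ w ℓ p N i := by
  rw [w] at h ⊢
  have hd1 : 1 ≤ pldig ℓ p N i := by
    rcases Nat.eq_zero_or_pos (pldig ℓ p N i) with h' | h'
    · exfalso; apply h; rw [h']; ring
    · omega
  calc plpow ℓ p i = 1 * plpow ℓ p i := (one_mul _).symm
  _ ≤ _ := Nat.mul_le_mul_right _ hd1

lemma sum_low {ℓ p N k : ℕ} (T : Finset ℕ) (hkT : k ∈ T)
    (hnz : w ℓ p N k ≠ 0) : plpow ℓ p k ≤ ∑ i ∈ T, w ℓ p N i := by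
  have h1 : w ℓ p N k ≤ ∑ i ∈ T, w ℓ p N i :=
    Finset.single_le_sum (fun i _ => Nat.zero_le _) hkT
  have h2 := w_low hnz
  omega

lemma sum_high {ℓ p N k : ℕ} (hℓ : 2 ≤ ℓ) (hp : 2 ≤ p) (T : Finset ℕ)
    (hT : T ⊆ Finset.range k) : ∑ i ∈ T, w ℓ p N i < plpow ℓ p k := by
  calc ∑ i ∈ T, w ℓ p N i ≤ ∑ i ∈ Finset.range k, w ℓ p N i :=
    Finset.sum_le_sum_of_subset hT
  _ < _ := sumw_lt hℓ hp N k

lemma main_bwd {ℓ p N : ℕ} (hℓ : 2 ≤ ℓ) (hp : 2 ≤ p) (t : ℕ)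
    (htail : ∀ i, i < t → pldig ℓ p N i = (if i = 0 then ℓ else p) - 1)
    (hd : pldig ℓ p N t = 1) (C : Finset ℕ) (hC : ∀ i ∈ C, t < i) :
    ∑ i ∈ insert t C, w ℓ p N i = ∑ i ∈ Finset.range t ∪ C, w ℓ p N i + 1 := by
  have htC : t ∉ C := fun h => lt_irrefl t (hC t h)
  have hdisj : Disjoint (Finset.range t) C := by
    rw [Finset.disjoint_left]; intro i hi hiC
    have := hC i hiC; simp only [Finset.mem_range] at hi; omega
  rw [Finset.sum_insert htC, Finset.sum_union hdisj, tail_sum hℓ hp t htail]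
  have hw : w ℓ p N t = plpow ℓ p t := by rw [w, hd, one_mul]
  have := plpow_pos hℓ hp (ℓ := ℓ) (p := p) t
  omega

lemma main_fwd {ℓ p N : ℕ} (hℓ : 2 ≤ ℓ) (hp : 2 ≤ p) :
    ∀ k (S S' : Finset ℕ), S ⊆ Finset.range k → S' ⊆ Finset.range k →
    (∀ i ∈ S, w ℓ p N i ≠ 0) → (∀ i ∈ S', w ℓ p N i ≠ 0) →
    ∑ i ∈ S, w ℓ p N i = ∑ i ∈ S', w ℓ p N i + 1 →
    ∃ t C, t < k ∧ (∀ i, i < t → pldig ℓ p N i = (if i = 0 then ℓ else p) - 1) ∧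
      pldig ℓ p N t = 1 ∧ (∀ i ∈ C, t < i ∧ i < k) ∧ (∀ i ∈ C, w ℓ p N i ≠ 0) ∧
      S = insert t C ∧ S' = Finset.range t ∪ C := by
  intro k
  induction k with
  | zero =>
    intro S S' hS hS' _ _ hsum
    simp only [Finset.range_zero, Finset.subset_empty] at hS hS'
    rw [hS, hS'] at hsum
    simp at hsum
  | succ k ih =>
    intro S S' hS hS' hnz hnz' hsum
    by_cases hk : k ∈ S <;> by_cases hk' : k ∈ S'
    · -- k in both: reduce
      have s1 : ∑ i ∈ S.erase k, w ℓ p N i + w ℓ p N k = ∑ i ∈ S, w ℓ p N i :=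
        Finset.sum_erase_add _ _ hk
      have s2 : ∑ i ∈ S'.erase k, w ℓ p N i + w ℓ p N k = ∑ i ∈ S', w ℓ p N i :=
        Finset.sum_erase_add _ _ hk'
      obtain ⟨t, C, htk, htail, hd, hC, hCnz, hSeq, hS'eq⟩ := ih (S.erase k) (S'.erase k)
        (subset_range_pred _ (fun i hi => hS (Finset.erase_subset _ _ hi)) (Finset.notMem_erase _ _))
        (subset_range_pred _ (fun i hi => hS' (Finset.erase_subset _ _ hi)) (Finset.notMem_erase _ _))
        (fun i hi => hnz i (Finset.erase_subset _ _ hi))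
        (fun i hi => hnz' i (Finset.erase_subset _ _ hi))
        (by omega)
      refine ⟨t, insert k C, by omega, htail, hd, ?_, ?_, ?_, ?_⟩
      · intro i hi
        rcases Finset.mem_insert.mp hi with h | h
        · subst h; exact ⟨htk, by omega⟩
        · have := hC i h; omega
      · intro i hi
        rcases Finset.mem_insert.mp hi with h | h
        · subst h; exact hnz i hk
        · exact hCnz i h
      · rw [← Finset.insert_erase hk, hSeq, Finset.insert_comm]
      · rw [← Finset.insert_erase hk', hS'eq, Finset.union_insert]
    · -- k ∈ S, k ∉ S' : the tail case, t = k
      have s1 : ∑ i ∈ S.erase k, w ℓ p N i + w ℓ p N k = ∑ i ∈ S, w ℓ p N i :=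
        Finset.sum_erase_add _ _ hk
      have hS'k : S' ⊆ Finset.range k := subset_range_pred _ hS' hk'
      have hub : ∑ i ∈ S', w ℓ p N i ≤ ∑ i ∈ Finset.range k, w ℓ p N i :=
        Finset.sum_le_sum_of_subset hS'k
      have hrk := sumw_lt hℓ hp N k
      have hwlk := w_low (hnz k hk)
      have hpos := plpow_pos hℓ hp (ℓ := ℓ) (p := p) k
      have hwk : w ℓ p N k = plpow ℓ p k := by omega
      have hd1 : pldig ℓ p N k = 1 := by
        have h1 : pldig ℓ p N k * plpow ℓ p k = 1 * plpow ℓ p k := by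
          have hw' : w ℓ p N k = pldig ℓ p N k * plpow ℓ p k := rfl
          omega
        exact Nat.eq_of_mul_eq_mul_right hpos h1
      have hS0 : ∑ i ∈ S.erase k, w ℓ p N i = 0 := by omega
      have hS0e : S.erase k = ∅ := by
        rw [Finset.eq_empty_iff_forall_notMem]
        intro i hi
        exact hnz i (Finset.erase_subset _ _ hi) ((Finset.sum_eq_zero_iff.mp hS0) i hi)
      have hS'sum : ∑ i ∈ S', w ℓ p N i = plpow ℓ p k - 1 := by omega
      have hrange : ∑ i ∈ Finset.range k, w ℓ p N i = plpow ℓ p k - 1 := by omega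
      have htail := sum_eq_max hℓ hp k hrange
      have hwpos : ∀ i, i < k → w ℓ p N i ≠ 0 := by
        intro i hik
        rw [w, htail i hik]
        have hppos := plpow_pos hℓ hp (ℓ := ℓ) (p := p) i
        have h2 : 1 ≤ (if i = 0 then ℓ else p) - 1 := by split <;> omega
        exact Nat.mul_ne_zero (by omega) (by omega)
      have hS'r : S' = Finset.range k := by
        apply Finset.Subset.antisymm hS'k
        intro i hi
        by_contra hiS'
        have hins : insert i S' ⊆ Finset.range k := Finset.insert_subset hi hS'k
        have hsum2 : ∑ j ∈ insert i S', w ℓ p N j ≤ ∑ j ∈ Finset.range k, w ℓ p N j :=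
          Finset.sum_le_sum_of_subset hins
        rw [Finset.sum_insert hiS'] at hsum2
        have := hwpos i (Finset.mem_range.mp hi)
        omega
      refine ⟨k, ∅, by omega, htail, hd1, by simp, by simp, ?_, ?_⟩
      · rw [← Finset.insert_erase hk, hS0e]
      · rw [hS'r, Finset.union_empty]
    · -- k ∈ S', k ∉ S : impossible
      exfalso
      have h1 := sum_low S' hk' (hnz' k hk')
      have h2 := sum_high (N := N) hℓ hp S (subset_range_pred _ hS hk)
      omega
    · obtain ⟨t, C, htk, htail, hd, hC, hCnz, hSeq, hS'eq⟩ :=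
        ih S S' (subset_range_pred _ hS hk) (subset_range_pred _ hS' hk') hnz hnz' hsum
      exact ⟨t, C, by omega, htail, hd, fun i hi => ⟨(hC i hi).1, by have := (hC i hi).2; omega⟩,
        hCnz, hSeq, hS'eq⟩

end PLAux

open PLAux

/-- The number of pairs `(m, m+2)` with both members in `supp(n)` is
`∑_{t ∈ T_n} 2^{g(n)−t−1}`, where `T_n` is the set of tail lengths `t` of `n`
with digit `n_t = 1`; in particular if `T_n = ∅` then no two elements of
`supp(n)` differ by exactly `2`. -/
theorem card_supp_pairs_differing_by_two (ℓ p n r : ℕ) (hℓ : 2 ≤ ℓ) (hp : 2 ≤ p)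
    (hr : pldig ℓ p (n + 1) r ≠ 0)
    (htop : ∀ i, r < i → pldig ℓ p (n + 1) i = 0) :
    (((Finset.range r).powerset.image (fun S => nSub ℓ p n S)).filter
        (fun m => m + 2 ∈ (Finset.range r).powerset.image (fun S => nSub ℓ p n S))).card
      = ∑ t ∈ (Finset.range r).filter
            (fun t => hasTail ℓ p n t ∧ pldig ℓ p (n + 1) t = 1),
          2 ^ (((((Finset.range (r + 1)).filter
                  (fun i => pldig ℓ p (n + 1) i ≠ 0)).card) - 1) - t - 1) ∧
    ((Finset.range r).filter (fun t => hasTail ℓ p n t ∧ pldig ℓ p (n + 1) t = 1) = ∅ →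
      ∀ m ∈ (Finset.range r).powerset.image (fun S => nSub ℓ p n S),
        m + 2 ∉ (Finset.range r).powerset.image (fun S => nSub ℓ p n S)) := by
  classical
  have hppos : ∀ i, 0 < plpow ℓ p i := plpow_pos hℓ hp
  have hwnz : ∀ i, pldig ℓ p (n+1) i ≠ 0 ↔ w ℓ p (n+1) i ≠ 0 := by
    intro i
    constructor
    · intro h
      exact Nat.mul_ne_zero h (by have := hppos i; omega)
    · intro h hd
      apply h; rw [w, hd]; ring
  have htot := total (N := n+1) (r := r) hℓ hp htop
  have hsumr : ∑ i ∈ Finset.range r, w ℓ p (n+1) i + w ℓ p (n+1) r = n + 1 := by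
    rw [Finset.sum_range_succ] at htot; omega
  have hwr : plpow ℓ p r ≤ w ℓ p (n+1) r := w_low ((hwnz r).mp hr)
  have hrlt := sumw_lt hℓ hp (n+1) r
  have hbound : ∀ S : Finset ℕ, S ⊆ Finset.range r →
      2 * ∑ i ∈ S, w ℓ p (n+1) i ≤ n := by
    intro S hS
    have h1 : ∑ i ∈ S, w ℓ p (n+1) i ≤ ∑ i ∈ Finset.range r, w ℓ p (n+1) i :=
      Finset.sum_le_sum_of_subset hS
    omega
  set G : Finset ℕ :=
    (Finset.range r).powerset.image (fun S => ∑ i ∈ S, w ℓ p (n+1) i) with hG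
  have hGmem : ∀ a, a ∈ G ↔
      ∃ S, S ⊆ Finset.range r ∧ ∑ i ∈ S, w ℓ p (n+1) i = a := by
    intro a; rw [hG]
    simp [Finset.mem_image, Finset.mem_powerset]
  have hGb : ∀ a ∈ G, 2 * a ≤ n := by
    intro a ha
    obtain ⟨S, hS, rfl⟩ := (hGmem a).mp ha
    exact hbound S hS
  have hPeq : (Finset.range r).powerset.image (fun S => nSub ℓ p n S)
      = G.image (fun a => n - 2 * a) := by
    rw [hG, Finset.image_image]; rfl
  set G2 := G.filter (fun a => 1 ≤ a ∧ a - 1 ∈ G) with hG2def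
  have hfilt : ((Finset.range r).powerset.image (fun S => nSub ℓ p n S)).filter
      (fun m => m + 2 ∈ (Finset.range r).powerset.image (fun S => nSub ℓ p n S))
      = G2.image (fun a => n - 2 * a) := by
    rw [hPeq]
    ext m
    simp only [Finset.mem_filter, Finset.mem_image, hG2def]
    constructor
    · rintro ⟨⟨a, ha, hma⟩, ⟨b, hb, hba⟩⟩
      have hma' : n - 2 * a = m := hma
      have hba' : n - 2 * b = m + 2 := hba
      have h2a := hGb a ha
      have h2b := hGb b hb
      refine ⟨a, ⟨ha, by omega, ?_⟩, hma⟩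
      rw [show a - 1 = b by omega]; exact hb
    · rintro ⟨a, ⟨ha, ha1, ham⟩, hma⟩
      have hma' : n - 2 * a = m := hma
      have h2a := hGb a ha
      have h2b := hGb _ ham
      refine ⟨⟨a, ha, hma⟩, ⟨a - 1, ham, ?_⟩⟩
      show n - 2 * (a - 1) = m + 2
      omega
  have hcard1 : (G2.image (fun a => n - 2 * a)).card = G2.card := by
    apply Finset.card_image_of_injOn
    intro a ha b hb hab
    have hab' : n - 2 * a = n - 2 * b := hab
    have h2a := hGb a (Finset.mem_filter.mp ha).1
    have h2b := hGb b (Finset.mem_filter.mp hb).1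
    omega
  set T := (Finset.range r).filter
      (fun t => hasTail ℓ p n t ∧ pldig ℓ p (n + 1) t = 1) with hT
  set A : ℕ → Finset ℕ := fun t =>
      ((Finset.Ioo t r).filter (fun i => pldig ℓ p (n+1) i ≠ 0)).powerset.image
        (fun C => plpow ℓ p t + ∑ i ∈ C, w ℓ p (n+1) i) with hA
  have hTmem : ∀ t, t ∈ T ↔ t < r ∧
      (∀ i, i < t → pldig ℓ p (n+1) i = (if i = 0 then ℓ else p) - 1) ∧
      pldig ℓ p (n+1) t = 1 := by
    intro t; rw [hT]
    rw [Finset.mem_filter, Finset.mem_range]; exact Iff.rfl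
  have hsum_tC : ∀ t C, pldig ℓ p (n+1) t = 1 → (∀ i ∈ C, t < i) →
      ∑ i ∈ insert t C, w ℓ p (n+1) i = plpow ℓ p t + ∑ i ∈ C, w ℓ p (n+1) i := by
    intro t C hd hC
    rw [Finset.sum_insert (fun h => lt_irrefl t (hC t h))]
    have hwt : w ℓ p (n+1) t = plpow ℓ p t := by rw [w, hd, one_mul]
    omega
  have hG2T : G2 = T.biUnion A := by
    ext a
    simp only [Finset.mem_biUnion]
    constructor
    · intro ha
      rw [hG2def, Finset.mem_filter] at ha
      obtain ⟨haG, ha1, ham⟩ := ha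
      obtain ⟨S, hS, hSa⟩ := (hGmem a).mp haG
      obtain ⟨S', hS', hS'a⟩ := (hGmem (a-1)).mp ham
      have hScsum : ∑ i ∈ S.filter (fun i => w ℓ p (n+1) i ≠ 0), w ℓ p (n+1) i = a := by
        rw [Finset.sum_filter_ne_zero]; exact hSa
      have hSc'sum : ∑ i ∈ S'.filter (fun i => w ℓ p (n+1) i ≠ 0), w ℓ p (n+1) i = a - 1 := by
        rw [Finset.sum_filter_ne_zero]; exact hS'a
      obtain ⟨t, C, htr, htail, hd, hC, hCnz, hSeq, hS'eq⟩ := main_fwd hℓ hp r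
        (S.filter (fun i => w ℓ p (n+1) i ≠ 0)) (S'.filter (fun i => w ℓ p (n+1) i ≠ 0))
        ((Finset.filter_subset _ _).trans hS) ((Finset.filter_subset _ _).trans hS')
        (fun i hi => (Finset.mem_filter.mp hi).2) (fun i hi => (Finset.mem_filter.mp hi).2)
        (by omega)
      refine ⟨t, (hTmem t).mpr ⟨htr, htail, hd⟩, ?_⟩
      rw [hA]
      simp only [Finset.mem_image, Finset.mem_powerset]
      refine ⟨C, ?_, ?_⟩
      · intro i hi
        simp only [Finset.mem_filter, Finset.mem_Ioo]
        refine ⟨⟨(hC i hi).1, (hC i hi).2⟩, (hwnz i).mpr (hCnz i hi)⟩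
      · show plpow ℓ p t + ∑ i ∈ C, w ℓ p (n+1) i = a
        rw [← hScsum, hSeq, hsum_tC t C hd (fun i hi => (hC i hi).1)]
    · rintro ⟨t, htT, haA⟩
      obtain ⟨htr, htail, hd⟩ := (hTmem t).mp htT
      rw [hA] at haA
      simp only [Finset.mem_image, Finset.mem_powerset] at haA
      obtain ⟨C, hC, hCa⟩ := haA
      have hCa' : plpow ℓ p t + ∑ i ∈ C, w ℓ p (n+1) i = a := hCa
      have hCio : ∀ i ∈ C, t < i ∧ i < r := by
        intro i hi
        have := hC hi
        simp only [Finset.mem_filter, Finset.mem_Ioo] at this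
        exact this.1
      have hCnz : ∀ i ∈ C, w ℓ p (n+1) i ≠ 0 := by
        intro i hi
        have := hC hi
        simp only [Finset.mem_filter, Finset.mem_Ioo] at this
        exact (hwnz i).mp this.2
      have he := hsum_tC t C hd (fun i hi => (hCio i hi).1)
      have hins : insert t C ⊆ Finset.range r := by
        intro i hi
        rcases Finset.mem_insert.mp hi with h | h
        · subst h; exact Finset.mem_range.mpr htr
        · exact Finset.mem_range.mpr (hCio i h).2
      have hbwd := main_bwd (N := n+1) hℓ hp t htail hd C (fun i hi => (hCio i hi).1)
      have hun : Finset.range t ∪ C ⊆ Finset.range r := by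
        intro i hi
        rcases Finset.mem_union.mp hi with h | h
        · exact Finset.mem_range.mpr (by have := Finset.mem_range.mp h; omega)
        · exact Finset.mem_range.mpr (hCio i h).2
      rw [hG2def, Finset.mem_filter]
      refine ⟨(hGmem _).mpr ⟨insert t C, hins, by omega⟩, by have := hppos t; omega, ?_⟩
      apply (hGmem _).mpr
      exact ⟨Finset.range t ∪ C, hun, by omega⟩
  have hdisj : ∀ t ∈ T, ∀ t' ∈ T, t ≠ t' → Disjoint (A t) (A t') := by
    intro t htT t' ht'T hne
    rw [Finset.disjoint_left]
    intro a haA haA'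
    obtain ⟨htr, htail, hd⟩ := (hTmem t).mp htT
    obtain ⟨htr', htail', hd'⟩ := (hTmem t').mp ht'T
    rw [hA] at haA haA'
    simp only [Finset.mem_image, Finset.mem_powerset] at haA haA'
    obtain ⟨C, hC, hCa⟩ := haA
    obtain ⟨C', hC', hC'a⟩ := haA'
    have hCa2 : plpow ℓ p t + ∑ i ∈ C, w ℓ p (n+1) i = a := hCa
    have hC'a2 : plpow ℓ p t' + ∑ i ∈ C', w ℓ p (n+1) i = a := hC'a
    have hCio : ∀ i ∈ C, t < i ∧ i < r := by
      intro i hi; have := hC hi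
      simp only [Finset.mem_filter, Finset.mem_Ioo] at this; exact this.1
    have hC'io : ∀ i ∈ C', t' < i ∧ i < r := by
      intro i hi; have := hC' hi
      simp only [Finset.mem_filter, Finset.mem_Ioo] at this; exact this.1
    have hCnz : ∀ i ∈ C, w ℓ p (n+1) i ≠ 0 := by
      intro i hi; have := hC hi
      simp only [Finset.mem_filter, Finset.mem_Ioo] at this
      exact (hwnz i).mp this.2
    have hC'nz : ∀ i ∈ C', w ℓ p (n+1) i ≠ 0 := by
      intro i hi; have := hC' hi
      simp only [Finset.mem_filter, Finset.mem_Ioo] at this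
      exact (hwnz i).mp this.2
    have he := hsum_tC t C hd (fun i hi => (hCio i hi).1)
    have he' := hsum_tC t' C' hd' (fun i hi => (hC'io i hi).1)
    have heq : insert t C = insert t' C' := by
      apply winj hℓ hp (n+1) r
      · intro i hi
        rcases Finset.mem_insert.mp hi with h | h
        · subst h; exact Finset.mem_range.mpr htr
        · exact Finset.mem_range.mpr (hCio i h).2
      · intro i hi
        rcases Finset.mem_insert.mp hi with h | h
        · subst h; exact Finset.mem_range.mpr htr'
        · exact Finset.mem_range.mpr (hC'io i h).2
      · intro i hi
        rcases Finset.mem_insert.mp hi with h | h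
        · subst h; exact (hwnz i).mp (by rw [hd]; omega)
        · exact hCnz i h
      · intro i hi
        rcases Finset.mem_insert.mp hi with h | h
        · subst h; exact (hwnz i).mp (by rw [hd']; omega)
        · exact hC'nz i h
      · omega
    have h1 : t ∈ insert t' C' := heq ▸ Finset.mem_insert_self t C
    have h2 : t' ∈ insert t C := heq ▸ Finset.mem_insert_self t' C'
    rcases Finset.mem_insert.mp h1 with h | h
    · exact hne h
    · have := (hC'io t h).1
      rcases Finset.mem_insert.mp h2 with h' | h'
      · exact hne h'.symm
      · have := (hCio t' h').1
        omega
  have hcardA : ∀ t ∈ T, (A t).card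
      = 2 ^ ((Finset.Ioo t r).filter (fun i => pldig ℓ p (n+1) i ≠ 0)).card := by
    intro t htT
    rw [hA]
    rw [Finset.card_image_of_injOn, Finset.card_powerset]
    intro C hC C' hC' hsumeq
    simp only [Finset.mem_coe, Finset.mem_powerset] at hC hC'
    have hsumeq' : plpow ℓ p t + ∑ i ∈ C, w ℓ p (n+1) i
        = plpow ℓ p t + ∑ i ∈ C', w ℓ p (n+1) i := hsumeq
    have hsums : ∑ i ∈ C, w ℓ p (n+1) i = ∑ i ∈ C', w ℓ p (n+1) i := by omega
    apply winj hℓ hp (n+1) r C C'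
    · intro i hi
      have := hC hi
      simp only [Finset.mem_filter, Finset.mem_Ioo] at this
      exact Finset.mem_range.mpr this.1.2
    · intro i hi
      have := hC' hi
      simp only [Finset.mem_filter, Finset.mem_Ioo] at this
      exact Finset.mem_range.mpr this.1.2
    · intro i hi
      have := hC hi
      simp only [Finset.mem_filter, Finset.mem_Ioo] at this
      exact (hwnz i).mp this.2
    · intro i hi
      have := hC' hi
      simp only [Finset.mem_filter, Finset.mem_Ioo] at this
      exact (hwnz i).mp this.2
    · exact hsums
  have hexp : ∀ t ∈ T, ((Finset.Ioo t r).filter (fun i => pldig ℓ p (n+1) i ≠ 0)).card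
      = (((Finset.range (r + 1)).filter (fun i => pldig ℓ p (n + 1) i ≠ 0)).card - 1) - t - 1 := by
    intro t htT
    obtain ⟨htr, htail, hd⟩ := (hTmem t).mp htT
    have h1 : Finset.range (r+1) = Finset.range t ∪ Finset.Ico t (r+1) := by
      ext i; simp only [Finset.mem_range, Finset.mem_union, Finset.mem_Ico]; omega
    have h2 : Finset.Ico t (r+1) = insert t (insert r (Finset.Ioo t r)) := by
      ext i
      simp only [Finset.mem_Ico, Finset.mem_insert, Finset.mem_Ioo]
      omega
    have e1 : (Finset.range (r+1)).filter (fun i => pldig ℓ p (n+1) i ≠ 0)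
        = Finset.range t ∪ insert t (insert r
            ((Finset.Ioo t r).filter (fun i => pldig ℓ p (n+1) i ≠ 0))) := by
      rw [h1, Finset.filter_union, h2, Finset.filter_insert, if_pos (by rw [hd]; omega),
        Finset.filter_insert, if_pos hr,
        Finset.filter_true_of_mem (fun i hi => ?_)]
      have hi' := Finset.mem_range.mp hi
      rw [htail i hi']
      split <;> omega
    have hdj : Disjoint (Finset.range t) (insert t (insert r
        ((Finset.Ioo t r).filter (fun i => pldig ℓ p (n+1) i ≠ 0)))) := by
      rw [Finset.disjoint_left]
      intro i hi hi'
      have h3 := Finset.mem_range.mp hi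
      rcases Finset.mem_insert.mp hi' with h | h
      · omega
      rcases Finset.mem_insert.mp h with h' | h'
      · omega
      · have := (Finset.mem_filter.mp h').1
        have := Finset.mem_Ioo.mp this
        omega
    have hnm1 : t ∉ insert r ((Finset.Ioo t r).filter (fun i => pldig ℓ p (n+1) i ≠ 0)) := by
      intro h
      rcases Finset.mem_insert.mp h with h' | h'
      · omega
      · have := Finset.mem_Ioo.mp (Finset.mem_filter.mp h').1
        omega
    have hnm2 : r ∉ (Finset.Ioo t r).filter (fun i => pldig ℓ p (n+1) i ≠ 0) := by
      intro h
      have := Finset.mem_Ioo.mp (Finset.mem_filter.mp h).1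
      omega
    rw [e1, Finset.card_union_of_disjoint hdj, Finset.card_insert_of_notMem hnm1,
      Finset.card_insert_of_notMem hnm2, Finset.card_range]
    omega
  have main : (((Finset.range r).powerset.image (fun S => nSub ℓ p n S)).filter
      (fun m => m + 2 ∈ (Finset.range r).powerset.image (fun S => nSub ℓ p n S))).card
      = ∑ t ∈ T, 2 ^ (((((Finset.range (r + 1)).filter
          (fun i => pldig ℓ p (n + 1) i ≠ 0)).card) - 1) - t - 1) := by
    rw [hfilt, hcard1, hG2T, Finset.card_biUnion hdisj]
    apply Finset.sum_congr rfl
    intro t htT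
    rw [hcardA t htT, hexp t htT]
  refine ⟨main, ?_⟩
  intro hTe m hm hm2
  rw [hTe] at main
  simp only [Finset.sum_empty] at main
  have hFe := Finset.card_eq_zero.mp main
  rw [Finset.eq_empty_iff_forall_notMem] at hFe
  exact hFe m (Finset.mem_filter.mpr ⟨hm, hm2⟩)
end

section
/- In the field ℚ(δ), for natural numbers μ_1, μ_2 and 0 ≤ k ≤ min(μ_1, μ_2), with n = μ_1 + μ_2: Θ(μ_1, μ_2, n−2k) / [n−2k+1] = (−1)^{n−k} · [n−k+1 choose k]_q / ( [μ_1 choose k]_q · [μ_2 choose k]_q ). Here Θ(r,s,t) := (−1)^{i+j+m}·[i+j+m+1]!·[i]!·[j]!·[m]! / ([i+j]!·[j+m]!·[m+i]!) with i = (r+s−t)/2, j = (r−s+t)/2, m = (−r+s+t)/2. -/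
/-- The quantum numbers `[n]` in `ℚ(δ)`, with `δ = X`:
`[0] = 0`, `[1] = 1`, `[n+1] = δ·[n] − [n−1]`. -/
noncomputable def q : ℕ → RatFunc ℚ
  | 0 => 0
  | 1 => 1
  | n + 2 => RatFunc.X * q (n + 1) - q n

/-- The quantum factorial `[n]! = [n][n−1]⋯[1]`. -/
noncomputable def qfact : ℕ → RatFunc ℚ
  | 0 => 1
  | n + 1 => q (n + 1) * qfact n

/-- The quantum binomial `[n choose k]_q = [n]!/([k]!·[n−k]!)`, zero for `k > n`. -/
noncomputable def qbinom (n k : ℕ) : RatFunc ℚ :=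
  if k ≤ n then qfact n / (qfact k * qfact (n - k)) else 0

/-- The theta network value `Θ(r,s,t)` of Kauffman and Lins, with
`i = (r+s−t)/2`, `j = (r−s+t)/2`, `m = (−r+s+t)/2`:
`Θ(r,s,t) = (−1)^{i+j+m}·[i+j+m+1]!·[i]!·[j]!·[m]! / ([i+j]!·[j+m]!·[m+i]!)`. -/
noncomputable def Theta (r s t : ℕ) : RatFunc ℚ :=
  (-1 : RatFunc ℚ) ^ ((r + s - t) / 2 + (r + t - s) / 2 + (s + t - r) / 2) *
    (qfact ((r + s - t) / 2 + (r + t - s) / 2 + (s + t - r) / 2 + 1) *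
      qfact ((r + s - t) / 2) * qfact ((r + t - s) / 2) * qfact ((s + t - r) / 2)) /
    (qfact ((r + s - t) / 2 + (r + t - s) / 2) *
      qfact ((r + t - s) / 2 + (s + t - r) / 2) *
      qfact ((s + t - r) / 2 + (r + s - t) / 2))

/-- Polynomial avatar of the quantum numbers. -/
noncomputable def Pq : ℕ → Polynomial ℚ
  | 0 => 0
  | 1 => 1
  | n + 2 => Polynomial.X * Pq (n + 1) - Pq n

lemma q_eq : ∀ n, q n = algebraMap (Polynomial ℚ) (RatFunc ℚ) (Pq n)
  | 0 => by simp [q, Pq]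
  | 1 => by simp [q, Pq]
  | n + 2 => by
      rw [q, Pq, map_sub, map_mul, q_eq (n + 1), q_eq n, RatFunc.algebraMap_X]

lemma Pq_monic : ∀ n, (Pq (n + 1)).Monic ∧ (Pq (n + 1)).degree = n
  | 0 => by constructor <;> simp [Pq]
  | 1 => by
      have h : Pq 2 = Polynomial.X := by simp [Pq]
      rw [h]; exact ⟨Polynomial.monic_X, Polynomial.degree_X⟩
  | n + 2 => by
      obtain ⟨hm, hd⟩ := Pq_monic (n + 1)
      have hlt : (Pq (n + 1)).degree < (Polynomial.X * Pq (n + 2)).degree := by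
        rw [Polynomial.degree_mul, Polynomial.degree_X, hd, (Pq_monic n).2]
        exact_mod_cast by omega
      have hm' : (Polynomial.X * Pq (n + 2)).Monic := Polynomial.monic_X.mul hm
      constructor
      · rw [Pq]; exact hm'.sub_of_left hlt
      · rw [Pq, Polynomial.degree_sub_eq_left_of_degree_lt hlt,
          Polynomial.degree_mul, Polynomial.degree_X, hd]
        push_cast
        ring

lemma q_ne_zero (n : ℕ) : q (n + 1) ≠ 0 := by
  rw [q_eq]
  simp only [ne_eq, map_eq_zero_iff _ (RatFunc.algebraMap_injective ℚ)]
  exact (Pq_monic n).1.ne_zero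

lemma qfact_ne_zero : ∀ n, qfact n ≠ 0
  | 0 => by simp [qfact]
  | n + 1 => by
      rw [qfact]
      exact mul_ne_zero (q_ne_zero n) (qfact_ne_zero n)

/-- The Gram determinant of the cell module of the two-part Eve valenced
Temperley–Lieb algebra: for `0 ≤ k ≤ min(μ₁,μ₂)` and `n = μ₁+μ₂`,
`Θ(μ₁,μ₂,n−2k)/[n−2k+1] = (−1)^{n−k}·[n−k+1 choose k]/([μ₁ choose k]·[μ₂ choose k])`. -/
theorem theta_gram_two_part (μ₁ μ₂ k : ℕ) (h₁ : k ≤ μ₁) (h₂ : k ≤ μ₂) :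
    Theta μ₁ μ₂ (μ₁ + μ₂ - 2 * k) / q (μ₁ + μ₂ - 2 * k + 1)
      = (-1 : RatFunc ℚ) ^ (μ₁ + μ₂ - k) *
          qbinom (μ₁ + μ₂ - k + 1) k / (qbinom μ₁ k * qbinom μ₂ k) := by
  obtain ⟨a, rfl⟩ : ∃ a, μ₁ = k + a := ⟨μ₁ - k, by omega⟩
  obtain ⟨b, rfl⟩ : ∃ b, μ₂ = k + b := ⟨μ₂ - k, by omega⟩
  have e1 : k + a + (k + b) - 2 * k = a + b := by omega
  have e2 : (k + a + (k + b) - (a + b)) / 2 = k := by omega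
  have e3 : (k + a + (a + b) - (k + b)) / 2 = a := by omega
  have e4 : (k + b + (a + b) - (k + a)) / 2 = b := by omega
  have e5 : k + a + (k + b) - k = k + (a + b) := by omega
  have e6 : k + (a + b) + 1 - k = a + b + 1 := by omega
  have e7 : k + a - k = a := by omega
  have e8 : k + b - k = b := by omega
  rw [Theta, e1, e2, e3, e4, e5, qbinom, qbinom, qbinom,
    if_pos (by omega : k ≤ k + (a + b) + 1), if_pos (by omega : k ≤ k + a),
    if_pos (by omega : k ≤ k + b), e6, e7, e8]
  have hf : ∀ m : ℕ, qfact (m + 1) = q (m + 1) * qfact m := fun m => rfl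
  rw [show a + b + 1 = (a + b) + 1 from rfl, hf (a + b)]
  have hq := q_ne_zero (a + b)
  have hk := qfact_ne_zero k
  have ha := qfact_ne_zero a
  have hb := qfact_ne_zero b
  have hab := qfact_ne_zero (a + b)
  have hka := qfact_ne_zero (k + a)
  have hkb := qfact_ne_zero (k + b)
  have hkab := qfact_ne_zero (k + (a + b) + 1)
  have hq' : q (1 + a + b) ≠ 0 := by rw [show 1 + a + b = a + b + 1 by ring]; exact hq
  field_simp
  rw [div_eq_iff (show qfact (b + k) ≠ 0 by
      rw [show b + k = k + b from by omega]; exact hkb)]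
  simp only [show k + (a + b) + 1 = k + a + b + 1 from by omega,
    show k + (a + b) = k + a + b from by omega,
    show b + k = k + b from by omega]
end

section
/- Fix integers ℓ ≥ 2 and p ≥ 2 and indices i_1 > i_2 ≥ 0. Let a_1 ≥ 1 and a_2 ≥ 1, with a_2 ≤ ℓ if i_2 = 0 and a_2 ≤ p if i_2 ≥ 1. Set n = a_1·p^{(i_1)} + a_2·p^{(i_2)} − 2. Say M ⊵ K when every (ℓ,p)-digit of M is greater than or equal to the corresponding (ℓ,p)-digit of K. Then for every k with 0 ≤ k ≤ a_2·p^{(i_2)} − 1, writing k = Σ_{i=0}^{i_2} k_i·p^{(i)} for its (ℓ,p)-digits, one has (n+1−k) ⊵ k if and only if 2·k_0 ≤ ℓ−1, 2·k_i ≤ p−1 for all 0 < i < i_2, and 2·k_{i_2} ≤ a_2 − 1. -/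
private lemma plpow_succ' (ℓ p j : ℕ) : plpow ℓ p (j+1) = ℓ * p ^ j := by
  simp [plpow]

private lemma pldig_zero' (ℓ p N : ℕ) : pldig ℓ p N 0 = N % ℓ := by
  simp [pldig]

private lemma pldig_succ' (ℓ p N j : ℕ) : pldig ℓ p N (j+1) = (N / ℓ / p ^ j) % p := by
  simp [pldig]

/-- Digits of a number below `ℓ·p^j` vanish at position `j+1`. -/
private lemma pldig_zero_of_lt (ℓ p N j : ℕ) (hℓ : 0 < ℓ) (hN : N < ℓ * p ^ j) :
    pldig ℓ p N (j+1) = 0 := by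
  rw [pldig_succ']
  have h1 : N / ℓ < p ^ j := by
    rw [Nat.div_lt_iff_lt_mul hℓ, Nat.mul_comm (p ^ j) ℓ]; exact hN
  simp [Nat.div_eq_of_lt h1]

/-- Adding a multiple of `ℓ·p^j` does not change digits at positions `≤ j`. -/
private lemma pldig_add_high (ℓ p c N i j : ℕ) (hℓ : 0 < ℓ) (hp : 0 < p) (hij : i ≤ j) :
    pldig ℓ p (c * (ℓ * p ^ j) + N) i = pldig ℓ p N i := by
  have h1 : c * (ℓ * p ^ j) + N = ℓ * (c * p ^ j) + N := by ring_nf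
  cases i with
  | zero => rw [pldig_zero', pldig_zero', h1, Nat.mul_add_mod]
  | succ m =>
    rw [pldig_succ', pldig_succ', h1, Nat.mul_add_div hℓ]
    have hpm : 0 < p ^ m := pow_pos hp _
    obtain ⟨d, rfl⟩ : ∃ d, j = m + 1 + d := ⟨j - (m + 1), by omega⟩
    have h2 : c * p ^ (m + 1 + d) = p ^ m * (p * (c * p ^ d)) := by ring
    rw [h2, Nat.mul_add_div hpm, Nat.mul_add_mod]

/-- No-borrow subtraction digit, full positions. -/
private lemma digit_sub_full (p q j C : ℕ) (hp : 2 ≤ p) (hq : q < p ^ (j+1) * C) :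
    (p ^ (j+1) * C - 1 - q) / p ^ j % p + q / p ^ j % p = p - 1 := by
  have hp0 : 0 < p := by omega
  have hXpos : 0 < p ^ (j+1) := pow_pos hp0 _
  have hpj : 0 < p ^ j := pow_pos hp0 _
  have hXj : p ^ (j+1) = p ^ j * p := pow_succ p j
  obtain ⟨Q, hQdef⟩ : ∃ Q, Q = q / p ^ (j+1) := ⟨_, rfl⟩
  obtain ⟨R, hRdef⟩ : ∃ R, R = q % p ^ (j+1) := ⟨_, rfl⟩
  have hqQR : p ^ (j+1) * Q + R = q := by rw [hQdef, hRdef]; exact Nat.div_add_mod q _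
  have hRX : R < p ^ (j+1) := by rw [hRdef]; exact Nat.mod_lt _ hXpos
  obtain ⟨r1, hr1def⟩ : ∃ r1, r1 = R / p ^ j := ⟨_, rfl⟩
  obtain ⟨r0, hr0def⟩ : ∃ r0, r0 = R % p ^ j := ⟨_, rfl⟩
  have hRr : p ^ j * r1 + r0 = R := by rw [hr1def, hr0def]; exact Nat.div_add_mod R _
  have hr0lt : r0 < p ^ j := by rw [hr0def]; exact Nat.mod_lt _ hpj
  have hr1lt : r1 < p := by
    rcases Nat.lt_or_ge r1 p with h | h
    · exact h
    · exfalso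
      have h2 : p ^ j * p ≤ p ^ j * r1 := Nat.mul_le_mul_left _ h
      omega
  have hQC : Q < C := by
    rcases Nat.lt_or_ge Q C with h | h
    · exact h
    · exfalso
      have h2 : p ^ (j+1) * C ≤ p ^ (j+1) * Q := Nat.mul_le_mul_left _ h
      omega
  have hXC : p ^ (j+1) * (C - 1 - Q) + p ^ (j+1) + p ^ (j+1) * Q = p ^ (j+1) * C := by
    rw [show p ^ (j+1) * (C - 1 - Q) + p ^ (j+1) + p ^ (j+1) * Q
        = p ^ (j+1) * (C - 1 - Q + 1 + Q) from by ring,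
      show C - 1 - Q + 1 + Q = C from by omega]
  have hsplit : p ^ (j+1) * C - 1 - q
      = p ^ (j+1) * (C - 1 - Q) + (p ^ (j+1) - 1 - R) := by omega
  have hXe : p ^ j * (p - 1 - r1) + p ^ j + p ^ j * r1 = p ^ j * p := by
    rw [show p ^ j * (p - 1 - r1) + p ^ j + p ^ j * r1
        = p ^ j * (p - 1 - r1 + 1 + r1) from by ring,
      show p - 1 - r1 + 1 + r1 = p from by omega]
  have hXR : p ^ (j+1) - 1 - R = p ^ j * (p - 1 - r1) + (p ^ j - 1 - r0) := by omega
  have hXD : p ^ (j+1) * (C - 1 - Q) = p ^ j * (p * (C - 1 - Q)) := by rw [hXj]; ring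
  have h1 : (p ^ (j+1) * C - 1 - q) / p ^ j = p * (C - 1 - Q) + (p - 1 - r1) := by
    rw [hsplit, hXR, hXD,
      show p ^ j * (p * (C - 1 - Q)) + (p ^ j * (p - 1 - r1) + (p ^ j - 1 - r0))
        = p ^ j * (p * (C - 1 - Q) + (p - 1 - r1)) + (p ^ j - 1 - r0) from by ring,
      Nat.mul_add_div hpj,
      Nat.div_eq_of_lt (show p ^ j - 1 - r0 < p ^ j from by omega), Nat.add_zero]
  have h2 : q / p ^ j = p * Q + r1 := by
    rw [← hqQR,
      show p ^ (j+1) * Q + R = p ^ j * (p * Q) + R from by rw [hXj]; ring,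
      Nat.mul_add_div hpj, hr1def]
  rw [h1, h2, Nat.mul_add_mod, Nat.mul_add_mod,
    Nat.mod_eq_of_lt (show p - 1 - r1 < p from by omega),
    Nat.mod_eq_of_lt hr1lt]
  omega

/-- No-borrow subtraction digit, top position. -/
private lemma digit_sub_top (p a e q : ℕ) (hp : 2 ≤ p) (ha : 1 ≤ a) (hap : a ≤ p)
    (hq : q < a * p ^ e) :
    (a * p ^ e - 1 - q) / p ^ e % p + q / p ^ e % p = a - 1 := by
  have hp0 : 0 < p := by omega
  have hpe : 0 < p ^ e := pow_pos hp0 _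
  obtain ⟨Q, hQdef⟩ : ∃ Q, Q = q / p ^ e := ⟨_, rfl⟩
  obtain ⟨R, hRdef⟩ : ∃ R, R = q % p ^ e := ⟨_, rfl⟩
  have hqQR : p ^ e * Q + R = q := by rw [hQdef, hRdef]; exact Nat.div_add_mod q _
  have hR : R < p ^ e := by rw [hRdef]; exact Nat.mod_lt _ hpe
  have hcomm : a * p ^ e = p ^ e * a := Nat.mul_comm _ _
  have hQa : Q < a := by
    rcases Nat.lt_or_ge Q a with h | h
    · exact h
    · exfalso
      have h2 : p ^ e * a ≤ p ^ e * Q := Nat.mul_le_mul_left _ h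
      omega
  have hmul : p ^ e * (a - 1 - Q) + p ^ e + p ^ e * Q = p ^ e * a := by
    rw [show p ^ e * (a - 1 - Q) + p ^ e + p ^ e * Q
        = p ^ e * (a - 1 - Q + 1 + Q) from by ring,
      show a - 1 - Q + 1 + Q = a from by omega]
  have hsplit : a * p ^ e - 1 - q = p ^ e * (a - 1 - Q) + (p ^ e - 1 - R) := by omega
  have h1 : (a * p ^ e - 1 - q) / p ^ e = a - 1 - Q := by
    rw [hsplit, Nat.mul_add_div hpe,
      Nat.div_eq_of_lt (show p ^ e - 1 - R < p ^ e from by omega), Nat.add_zero]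
  rw [h1, ← hQdef, Nat.mod_eq_of_lt (show a - 1 - Q < p from by omega),
    Nat.mod_eq_of_lt (show Q < p from by omega)]
  omega

/-- Digit-wise dominance criterion for the two-part Eve composition
`(a₁·p^{(i₁)}−1, a₂·p^{(i₂)}−1)`: with `n+2 = a₁·p^{(i₁)} + a₂·p^{(i₂)}` and
`0 ≤ k ≤ a₂·p^{(i₂)}−1`, one has `(n+1−k) ⊵ k` iff `2k_0 ≤ ℓ−1`,
`2k_i ≤ p−1` for `0 < i < i₂`, and `2k_{i₂} ≤ a₂−1`. -/
theorem dominance_two_part_eve (ℓ p i₁ i₂ a₁ a₂ n : ℕ) (hℓ : 2 ≤ ℓ) (hp : 2 ≤ p)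
    (hi : i₂ < i₁) (ha₁ : 1 ≤ a₁) (ha₂ : 1 ≤ a₂)
    (ha₂ℓ : i₂ = 0 → a₂ ≤ ℓ) (ha₂p : 1 ≤ i₂ → a₂ ≤ p)
    (hn : n + 2 = a₁ * plpow ℓ p i₁ + a₂ * plpow ℓ p i₂)
    (k : ℕ) (hk : k ≤ a₂ * plpow ℓ p i₂ - 1) :
    (∀ i, pldig ℓ p k i ≤ pldig ℓ p (n + 1 - k) i) ↔
      (2 * pldig ℓ p k 0 ≤ ℓ - 1 ∧
       (∀ i, 0 < i → i < i₂ → 2 * pldig ℓ p k i ≤ p - 1) ∧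
       2 * pldig ℓ p k i₂ ≤ a₂ - 1) := by
  have hℓ0 : 0 < ℓ := by omega
  have hp0 : 0 < p := by omega
  obtain ⟨j₁, rfl⟩ : ∃ j₁, i₁ = j₁ + 1 := ⟨i₁ - 1, by omega⟩
  have hplpos : 0 < plpow ℓ p i₂ := by
    unfold plpow; split
    · exact Nat.one_pos
    · exact Nat.mul_pos hℓ0 (pow_pos hp0 _)
  have hA2pos : 0 < a₂ * plpow ℓ p i₂ := Nat.mul_pos (by omega) hplpos
  have hkA2 : k < a₂ * plpow ℓ p i₂ := by omega
  have hmk : n + 1 - k = a₁ * plpow ℓ p (j₁ + 1) + (a₂ * plpow ℓ p i₂ - 1 - k) := by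
    omega
  have hA1eq : a₁ * plpow ℓ p (j₁ + 1) = a₁ * (ℓ * p ^ j₁) := by rw [plpow_succ']
  -- digits of n+1-k at positions ≤ i₂ agree with those of a₂·p^{(i₂)} − 1 − k
  have hagree : ∀ i, i ≤ i₂ →
      pldig ℓ p (n + 1 - k) i = pldig ℓ p (a₂ * plpow ℓ p i₂ - 1 - k) i := by
    intro i hii
    rw [hmk, hA1eq]
    exact pldig_add_high ℓ p a₁ _ i j₁ hℓ0 hp0 (by omega)
  -- digits of k above i₂ vanish
  have hzero : ∀ i, i₂ < i → pldig ℓ p k i = 0 := by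
    intro i hii
    obtain ⟨j, rfl⟩ : ∃ j, i = j + 1 := ⟨i - 1, by omega⟩
    apply pldig_zero_of_lt ℓ p k j hℓ0
    refine lt_of_lt_of_le hkA2 ?_
    cases i₂ with
    | zero =>
      have h1 := ha₂ℓ rfl
      have h2 : plpow ℓ p 0 = 1 := by simp [plpow]
      have h3 : (1:ℕ) ≤ p ^ j := Nat.one_le_pow _ _ hp0
      have h4 : ℓ * 1 ≤ ℓ * p ^ j := Nat.mul_le_mul_left _ h3
      rw [h2, Nat.mul_one]
      omega
    | succ e =>
      rw [plpow_succ']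
      have h1 : a₂ * (ℓ * p ^ e) ≤ p * (ℓ * p ^ e) :=
        Nat.mul_le_mul_right _ (ha₂p (by omega))
      have h2 : p * (ℓ * p ^ e) = ℓ * p ^ (e + 1) := by ring
      have h3 : ℓ * p ^ (e + 1) ≤ ℓ * p ^ j :=
        Nat.mul_le_mul_left _ (Nat.pow_le_pow_right hp0 (by omega))
      omega
  -- the digit-sum computation at positions ≤ i₂
  have hsum : ∀ i, i ≤ i₂ →
      pldig ℓ p (n + 1 - k) i + pldig ℓ p k i
        = (if i = i₂ then a₂ - 1 else if i = 0 then ℓ - 1 else p - 1) := by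
    intro i hii
    rw [hagree i hii]
    cases i₂ with
    | zero =>
      obtain rfl : i = 0 := by omega
      have hℓa : a₂ ≤ ℓ := ha₂ℓ rfl
      have hpl1 : plpow ℓ p 0 = 1 := by simp [plpow]
      rw [hpl1, Nat.mul_one] at hkA2
      rw [pldig_zero', pldig_zero', hpl1, Nat.mul_one, if_pos rfl,
        Nat.mod_eq_of_lt (show a₂ - 1 - k < ℓ from by omega),
        Nat.mod_eq_of_lt (show k < ℓ from by omega)]
      omega
    | succ e =>
      have hpl : plpow ℓ p (e + 1) = ℓ * p ^ e := plpow_succ' ℓ p e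
      have hE : a₂ * (ℓ * p ^ e) = ℓ * (a₂ * p ^ e) := by ring
      have hkA2' : k < ℓ * (a₂ * p ^ e) := by rw [hpl] at hkA2; omega
      have hqlt : k / ℓ < a₂ * p ^ e := by
        rw [Nat.div_lt_iff_lt_mul hℓ0, Nat.mul_comm (a₂ * p ^ e) ℓ]; exact hkA2'
      have hdm : ℓ * (k / ℓ) + k % ℓ = k := Nat.div_add_mod k ℓ
      have hc : k % ℓ < ℓ := Nat.mod_lt _ hℓ0
      have hDD : ℓ * (a₂ * p ^ e - 1 - k / ℓ) + ℓ + ℓ * (k / ℓ) = ℓ * (a₂ * p ^ e) := by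
        rw [show ℓ * (a₂ * p ^ e - 1 - k / ℓ) + ℓ + ℓ * (k / ℓ)
            = ℓ * (a₂ * p ^ e - 1 - k / ℓ + 1 + k / ℓ) from by ring,
          show a₂ * p ^ e - 1 - k / ℓ + 1 + k / ℓ = a₂ * p ^ e from by omega]
      have hrsplit : a₂ * plpow ℓ p (e + 1) - 1 - k
          = ℓ * (a₂ * p ^ e - 1 - k / ℓ) + (ℓ - 1 - k % ℓ) := by
        rw [hpl]; omega
      have hrdiv : (a₂ * plpow ℓ p (e + 1) - 1 - k) / ℓ = a₂ * p ^ e - 1 - k / ℓ := by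
        rw [hrsplit, Nat.mul_add_div hℓ0,
          Nat.div_eq_of_lt (show ℓ - 1 - k % ℓ < ℓ from by omega), Nat.add_zero]
      have hrmod : (a₂ * plpow ℓ p (e + 1) - 1 - k) % ℓ = ℓ - 1 - k % ℓ := by
        rw [hrsplit, Nat.mul_add_mod,
          Nat.mod_eq_of_lt (show ℓ - 1 - k % ℓ < ℓ from by omega)]
      cases i with
      | zero =>
        rw [pldig_zero', pldig_zero', hrmod,
          if_neg (show ¬((0:ℕ) = e + 1) from by omega), if_pos rfl]
        omega
      | succ j =>
        rw [pldig_succ', pldig_succ', hrdiv]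
        rcases Nat.lt_or_ge j e with hje | hje
        · -- middle digit
          obtain ⟨d, rfl⟩ : ∃ d, e = j + 1 + d := ⟨e - (j + 1), by omega⟩
          have hne1 : ¬(j + 1 = j + 1 + d + 1) := by omega
          have hne2 : ¬(j + 1 = 0) := by omega
          rw [if_neg hne1, if_neg hne2]
          have heq : a₂ * p ^ (j + 1 + d) = p ^ (j + 1) * (a₂ * p ^ d) := by
            rw [pow_add]; ring
          rw [heq] at hqlt ⊢
          exact digit_sub_full p (k / ℓ) j (a₂ * p ^ d) hp hqlt
        · -- top digit
          obtain rfl : j = e := by omega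
          rw [if_pos rfl]
          exact digit_sub_top p a₂ j (k / ℓ) hp ha₂ (ha₂p (by omega)) hqlt
  constructor
  · intro h
    refine ⟨?_, ?_, ?_⟩
    · have h0 := hsum 0 (Nat.zero_le _)
      have hd := h 0
      by_cases hc : (0:ℕ) = i₂
      · have ha := ha₂ℓ hc.symm
        rw [if_pos hc] at h0
        omega
      · rw [if_neg hc, if_pos rfl] at h0
        omega
    · intro i h1 h2
      have h0 := hsum i (le_of_lt h2)
      have hd := h i
      rw [if_neg (show ¬(i = i₂) from by omega),
        if_neg (show ¬(i = 0) from by omega)] at h0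
      omega
    · have h0 := hsum i₂ le_rfl
      have hd := h i₂
      rw [if_pos rfl] at h0
      omega
  · rintro ⟨h1, h2, h3⟩ i
    by_cases hii : i ≤ i₂
    · have h0 := hsum i hii
      by_cases hieq : i = i₂
      · subst hieq
        rw [if_pos rfl] at h0
        omega
      · by_cases hi0 : i = 0
        · subst hi0
          rw [if_neg hieq, if_pos rfl] at h0
          omega
        · have hmid := h2 i (by omega) (by omega)
          rw [if_neg hieq, if_neg hi0] at h0
          omega
    · rw [hzero i (by omega)]
      exact Nat.zero_le _
end

section
/- Fix integers ℓ ≥ 2 and p ≥ 2, and suppose ℓ divides n+1. Then any two distinct elements of supp(n) differ by at least 2ℓ. -/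
lemma digit_mod_sum (p : ℕ) (hp : 0 < p) (M : ℕ) :
    ∀ s : ℕ, ∑ j ∈ Finset.range s, (M / p ^ j % p) * p ^ j = M % p ^ s := by
  intro s
  induction s with
  | zero => simp [Nat.mod_one]
  | succ s ih =>
    rw [Finset.sum_range_succ, ih]
    have hps : 0 < p ^ s := pow_pos hp s
    have ha : M % p ^ s < p ^ s := Nat.mod_lt _ hps
    have hb : M / p ^ s % p < p := Nat.mod_lt _ hp
    have h1 : p ^ s * (M / p ^ s) + M % p ^ s = M := Nat.div_add_mod M (p ^ s)
    have h2 : p * (M / p ^ s / p) + M / p ^ s % p = M / p ^ s := Nat.div_add_mod _ p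
    have hM : M = (M / p ^ s / p) * p ^ (s + 1) + (M % p ^ s + M / p ^ s % p * p ^ s) := by
      conv_lhs => rw [← h1, ← h2]
      ring
    have hlt : M % p ^ s + M / p ^ s % p * p ^ s < p ^ (s + 1) := by
      have hmul : M / p ^ s % p * p ^ s ≤ (p - 1) * p ^ s :=
        Nat.mul_le_mul_right _ (Nat.le_sub_one_of_lt hb)
      have h3 : (p - 1) * p ^ s + p ^ s = p ^ (s + 1) := by
        rw [Nat.sub_one_mul, pow_succ]
        have : p ^ s ≤ p ^ s * p := Nat.le_mul_of_pos_right _ hp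
        rw [mul_comm p (p ^ s)]
        omega
      omega
    calc M % p ^ s + M / p ^ s % p * p ^ s
        = ((M / p ^ s / p) * p ^ (s + 1) + (M % p ^ s + M / p ^ s % p * p ^ s)) % p ^ (s + 1) := by
          rw [Nat.mul_add_mod', Nat.mod_eq_of_lt hlt]
      _ = M % p ^ (s + 1) := by rw [← hM]

/-- If `ℓ ∣ n+1`, then any two distinct elements of `supp(n)` differ by at
least `2ℓ`. -/
theorem supp_gap_of_dvd (ℓ p n r : ℕ) (hℓ : 2 ≤ ℓ) (hp : 2 ≤ p)
    (hdvd : ℓ ∣ (n + 1))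
    (hr : pldig ℓ p (n + 1) r ≠ 0)
    (htop : ∀ i, r < i → pldig ℓ p (n + 1) i = 0) :
    ∀ S₁ S₂ : Finset ℕ, S₁ ⊆ Finset.range r → S₂ ⊆ Finset.range r →
      nSub ℓ p n S₁ ≠ nSub ℓ p n S₂ →
      (2 * ℓ : ℤ) ≤ |(nSub ℓ p n S₁ : ℤ) - (nSub ℓ p n S₂ : ℤ)| := by
  intro S₁ S₂ hS₁ hS₂ hNe
  have hℓ0 : 0 < ℓ := by omega
  have hp0 : 0 < p := by omega
  have hmod0 : (n + 1) % ℓ = 0 := by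
    obtain ⟨k, hk⟩ := hdvd; rw [hk]; exact Nat.mul_mod_right ℓ k
  have hd0 : pldig ℓ p (n + 1) 0 = 0 := by simp [pldig, hmod0]
  obtain _ | s := r
  · exact absurd hd0 hr
  set M := (n + 1) / ℓ with hM
  set f : ℕ → ℕ := fun i => pldig ℓ p (n + 1) i * plpow ℓ p i with hf
  have hfsucc : ∀ i : ℕ, f (i + 1) = ℓ * ((M / p ^ i % p) * p ^ i) := by
    intro i
    simp only [hf, pldig, plpow, Nat.succ_ne_zero, if_false, Nat.add_sub_cancel]
    ring
  have hsum : ∀ t : ℕ, ∑ i ∈ Finset.range (t + 1), f i = ℓ * (M % p ^ t) := by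
    intro t
    rw [Finset.sum_range_succ']
    have h0 : f 0 = 0 := by simp [hf, hd0]
    rw [h0, add_zero]
    calc ∑ i ∈ Finset.range t, f (i + 1)
        = ∑ i ∈ Finset.range t, ℓ * ((M / p ^ i % p) * p ^ i) :=
          Finset.sum_congr rfl fun i _ => hfsucc i
      _ = ℓ * ∑ i ∈ Finset.range t, (M / p ^ i % p) * p ^ i := (Finset.mul_sum _ _ _).symm
      _ = ℓ * (M % p ^ t) := by rw [digit_mod_sum p hp0 M t]
  have hps : 0 < p ^ s := pow_pos hp0 s
  -- full sum is at most n+1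
  have htot : ∑ i ∈ Finset.range (s + 2), f i ≤ n + 1 := by
    rw [hsum (s + 1)]
    calc ℓ * (M % p ^ (s + 1)) ≤ ℓ * M := Nat.mul_le_mul_left ℓ (Nat.mod_le _ _)
      _ = n + 1 := Nat.mul_div_cancel' hdvd
  have hfr : ℓ * p ^ s ≤ f (s + 1) := by
    have h1 : 1 ≤ pldig ℓ p (n + 1) (s + 1) := Nat.one_le_iff_ne_zero.mpr hr
    have : plpow ℓ p (s + 1) = ℓ * p ^ s := by simp [plpow]
    calc ℓ * p ^ s = 1 * (ℓ * p ^ s) := (one_mul _).symm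
      _ ≤ pldig ℓ p (n + 1) (s + 1) * (ℓ * p ^ s) := Nat.mul_le_mul_right _ h1
      _ = f (s + 1) := by rw [hf]; simp only []; rw [this]
  have hsplit : ∑ i ∈ Finset.range (s + 2), f i
      = ∑ i ∈ Finset.range (s + 1), f i + f (s + 1) := Finset.sum_range_succ f (s + 1)
  have hC : ∑ i ∈ Finset.range (s + 1), f i = ℓ * (M % p ^ s) := hsum s
  have hCx : ℓ * (M % p ^ s) + ℓ ≤ ℓ * p ^ s := by
    have h4 : ℓ * (M % p ^ s + 1) ≤ ℓ * p ^ s :=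
      Nat.mul_le_mul_left ℓ (Nat.mod_lt M hps)
    rw [Nat.mul_add, Nat.mul_one] at h4
    exact h4
  have hle : ∀ S : Finset ℕ, S ⊆ Finset.range (s + 1) →
      ∑ i ∈ S, f i ≤ ℓ * (M % p ^ s) := by
    intro S hS
    rw [← hC]
    exact Finset.sum_le_sum_of_subset hS
  have hA := hle S₁ hS₁
  have hB := hle S₂ hS₂
  -- 2 * sum ≤ n for each
  have h2A : 2 * ∑ i ∈ S₁, f i ≤ n := by omega
  have h2B : 2 * ∑ i ∈ S₂, f i ≤ n := by omega
  -- divisibility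
  have hdvdf : ∀ i : ℕ, ℓ ∣ f i := by
    intro i
    obtain _ | j := i
    · simp [hf, hd0]
    · rw [hfsucc j]; exact Dvd.intro _ rfl
  have hdA : ℓ ∣ ∑ i ∈ S₁, f i := Finset.dvd_sum fun i _ => hdvdf i
  have hdB : ℓ ∣ ∑ i ∈ S₂, f i := Finset.dvd_sum fun i _ => hdvdf i
  have e1 : (nSub ℓ p n S₁ : ℤ) = (n : ℤ) - 2 * ∑ i ∈ S₁, (f i : ℤ) := by
    rw [nSub]
    rw [show (∑ i ∈ S₁, pldig ℓ p (n + 1) i * plpow ℓ p i) = ∑ i ∈ S₁, f i from rfl]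
    push_cast [Nat.cast_sub h2A]
    ring
  have e2 : (nSub ℓ p n S₂ : ℤ) = (n : ℤ) - 2 * ∑ i ∈ S₂, (f i : ℤ) := by
    rw [nSub]
    rw [show (∑ i ∈ S₂, pldig ℓ p (n + 1) i * plpow ℓ p i) = ∑ i ∈ S₂, f i from rfl]
    push_cast [Nat.cast_sub h2B]
    ring
  have hne0 : (nSub ℓ p n S₁ : ℤ) - (nSub ℓ p n S₂ : ℤ) ≠ 0 := by
    intro h
    exact hNe (Nat.cast_injective (by linarith [sub_eq_zero.mp h] : (nSub ℓ p n S₁ : ℤ) = nSub ℓ p n S₂))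
  have hdvd2 : (2 * ℓ : ℤ) ∣ (nSub ℓ p n S₁ : ℤ) - (nSub ℓ p n S₂ : ℤ) := by
    rw [e1, e2]
    have hA' : (ℓ : ℤ) ∣ ∑ i ∈ S₁, (f i : ℤ) := by
      push_cast [← Nat.cast_sum]
      exact_mod_cast Int.natCast_dvd_natCast.mpr hdA
    have hB' : (ℓ : ℤ) ∣ ∑ i ∈ S₂, (f i : ℤ) := by
      push_cast [← Nat.cast_sum]
      exact_mod_cast Int.natCast_dvd_natCast.mpr hdB
    have : ((n : ℤ) - 2 * ∑ i ∈ S₁, (f i : ℤ)) - ((n : ℤ) - 2 * ∑ i ∈ S₂, (f i : ℤ))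
        = 2 * ((∑ i ∈ S₂, (f i : ℤ)) - ∑ i ∈ S₁, (f i : ℤ)) := by ring
    rw [this]
    exact mul_dvd_mul_left 2 (dvd_sub hB' hA')
  have habs : (2 * ℓ : ℤ) ∣ |(nSub ℓ p n S₁ : ℤ) - (nSub ℓ p n S₂ : ℤ)| :=
    (dvd_abs _ _).mpr hdvd2
  exact Int.le_of_dvd (abs_pos.mpr hne0) habs
end
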